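/- arXiv:1107.5783 — 7 statements merged into one kernel-verified Lean document; each statement's English description precedes it below -/
import Mathlib

section
/- Let F : X → Y be a flat map, i.e., for every v ∈ V_X the projected restriction F_v : W_X → W_Y, F_v(w) = P_Y F(w+v), is a C¹ diffeomorphism. Then the map Φ : W_Y × V_X → W_X × V_X given by Φ(z,v) = ((F_v)⁻¹(z), v) is a C¹ diffeomorphism. -/
/- Product model of the Banach space decompositions `X = W_X ⊕ V_X` and
`Y = W_Y ⊕ V_Y`: `X = W × V`, `Y = W' × V'`, with `P_X = Prod.fst`,
`Q_X = Prod.snd`, `P_Y = Prod.fst`, `Q_Y = Prod.snd`. -/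
variable {W V W' V' : Type*}
  [NormedAddCommGroup W] [NormedSpace ℝ W] [CompleteSpace W]
  [NormedAddCommGroup V] [NormedSpace ℝ V] [CompleteSpace V]
  [NormedAddCommGroup W'] [NormedSpace ℝ W'] [CompleteSpace W']
  [NormedAddCommGroup V'] [NormedSpace ℝ V'] [CompleteSpace V']

/-- The projected restriction `F_v : W_X → W_Y`, `F_v(w) = P_Y F(w + v)`. -/
def projRestr (F : W × V → W' × V') (v : V) : W → W' := fun w => (F (w, v)).1

/-- `F` is a flat `C¹` map, with `G v` the inverse of the projected restriction
`F_v`: each `F_v : W_X → W_Y` is a `C¹` diffeomorphism. -/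
def IsFlat (F : W × V → W' × V') (G : V → W' → W) : Prop :=
  ContDiff ℝ 1 F ∧
  ∀ v : V, ContDiff ℝ 1 (projRestr F v) ∧ ContDiff ℝ 1 (G v) ∧
    Function.LeftInverse (G v) (projRestr F v) ∧
    Function.RightInverse (G v) (projRestr F v)

/-- if `F` is flat then `Φ(z, v) = ((F_v)⁻¹ z, v)` is a `C¹`
diffeomorphism from `W_Y × V_X` onto `W_X × V_X`, with inverse
`Ψ(w, v) = (F_v w, v)`. -/
theorem flat_changeOfVariables_diffeo (F : W × V → W' × V') (G : V → W' → W)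
    (hF : IsFlat F G) :
    ContDiff ℝ 1 (fun p : W' × V => (G p.2 p.1, p.2)) ∧
    Function.Bijective (fun p : W' × V => (G p.2 p.1, p.2)) ∧
    ContDiff ℝ 1 (fun q : W × V => (projRestr F q.2 q.1, q.2)) ∧
    Function.LeftInverse (fun q : W × V => (projRestr F q.2 q.1, q.2))
      (fun p : W' × V => (G p.2 p.1, p.2)) ∧
    Function.RightInverse (fun q : W × V => (projRestr F q.2 q.1, q.2))
      (fun p : W' × V => (G p.2 p.1, p.2)) := by
  obtain ⟨hFc, h⟩ := hF
  set Φ : W' × V → W × V := fun p => (G p.2 p.1, p.2) with hΦdef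
  set Ψ : W × V → W' × V := fun q => (projRestr F q.2 q.1, q.2) with hΨdef
  have hΨc : ContDiff ℝ 1 Ψ := (contDiff_fst.comp hFc).prodMk contDiff_snd
  have hleft : Function.LeftInverse Ψ Φ := fun p =>
    Prod.ext ((h p.2).2.2.2 p.1) rfl
  have hright : Function.RightInverse Ψ Φ := fun q =>
    Prod.ext ((h q.2).2.2.1 q.1) rfl
  have hΦc : ContDiff ℝ 1 Φ := by
    rw [contDiff_iff_contDiffAt]
    intro p
    -- work at the point q = Φ p, so that Ψ q = p
    set w : W := G p.2 p.1 with hw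
    set v : V := p.2 with hv
    set q : W × V := (w, v) with hq
    have hΨq : Ψ q = p := hleft p
    -- derivative data
    have hFd : HasFDerivAt F (fderiv ℝ F q) q :=
      ((hFc.differentiable one_ne_zero) q).hasFDerivAt
    set DF : W × V →L[ℝ] W' × V' := fderiv ℝ F q with hDF
    -- derivative of the projected restriction at w
    set A : W →L[ℝ] W' :=
      ((ContinuousLinearMap.fst ℝ W' V').comp
        (DF.comp (ContinuousLinearMap.inl ℝ W V))) with hA
    set C : V →L[ℝ] W' :=
      ((ContinuousLinearMap.fst ℝ W' V').comp
        (DF.comp (ContinuousLinearMap.inr ℝ W V))) with hC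
    have hAd : HasFDerivAt (projRestr F v) A w :=
      (hFd.comp w (hasFDerivAt_prodMk_left w v)).fst
    -- derivative of G v at z = projRestr F v w
    set z : W' := projRestr F v w with hz
    have hEd : HasFDerivAt (G v) (fderiv ℝ (G v) z) z :=
      (((h v).2.1.differentiable one_ne_zero) z).hasFDerivAt
    set E : W' →L[ℝ] W := fderiv ℝ (G v) z with hE
    -- E ∘ A = id
    have hEA : E.comp A = ContinuousLinearMap.id ℝ W := by
      have h1 : HasFDerivAt (fun w' => G v (projRestr F v w')) (E.comp A) w :=
        hEd.comp w hAd
      have h2 : (fun w' => G v (projRestr F v w')) = id := funext (h v).2.2.1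
      rw [h2] at h1
      exact h1.unique (hasFDerivAt_id w)
    -- A ∘ E = id
    have hAE : A.comp E = ContinuousLinearMap.id ℝ W' := by
      have hwz : G v z = w := (h v).2.2.1 w
      have hAd' : HasFDerivAt (projRestr F v) A (G v z) := by rw [hwz]; exact hAd
      have h1 : HasFDerivAt (fun z' => projRestr F v (G v z')) (A.comp E) z :=
        hAd'.comp z hEd
      have h2 : (fun z' => projRestr F v (G v z')) = id := funext (h v).2.2.2
      rw [h2] at h1
      exact h1.unique (hasFDerivAt_id z)
    have hEAap : ∀ x : W, E (A x) = x := fun x => DFunLike.congr_fun hEA x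
    have hAEap : ∀ x : W', A (E x) = x := fun x => DFunLike.congr_fun hAE x
    -- splitting of the derivative of F in the first coordinate
    have key : ∀ dw dv, (DF (dw, dv)).1 = (DF (dw, 0)).1 + (DF (0, dv)).1 := by
      intro dw dv
      rw [show ((dw, dv) : W × V) = (dw, 0) + (0, dv) by simp, map_add]
      rfl
    -- the invertible derivative of Ψ at q
    set T' : W × V →L[ℝ] W' × V :=
      (((ContinuousLinearMap.fst ℝ W' V').comp DF).prod
        (ContinuousLinearMap.snd ℝ W V)) with hT'
    set Tinv : W' × V →L[ℝ] W × V :=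
      ((E.comp ((ContinuousLinearMap.fst ℝ W' V) -
          C.comp (ContinuousLinearMap.snd ℝ W' V))).prod
        (ContinuousLinearMap.snd ℝ W' V)) with hTinv
    have hgf : ∀ x : W × V, Tinv (T' x) = x := by
      intro x
      have hAx : A x.1 = (DF (x.1, 0)).1 := rfl
      have hCx : C x.2 = (DF (0, x.2)).1 := rfl
      apply Prod.ext
      · show E ((DF (x.1, x.2)).1 - C x.2) = x.1
        rw [hCx, key x.1 x.2, add_sub_cancel_right, ← hAx, hEAap]
      · rfl
    have hfg : ∀ y : W' × V, T' (Tinv y) = y := by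
      intro y
      apply Prod.ext
      · show (DF (E (y.1 - C y.2), y.2)).1 = y.1
        have hAx : A (E (y.1 - C y.2)) = (DF (E (y.1 - C y.2), 0)).1 := rfl
        rw [key, ← hAx, hAEap]
        show y.1 - C y.2 + C y.2 = y.1
        abel
      · rfl
    set T : (W × V) ≃L[ℝ] W' × V :=
      ContinuousLinearEquiv.equivOfInverse T' Tinv hgf hfg with hT
    have hΨd : HasFDerivAt Ψ (T : (W × V) →L[ℝ] W' × V) q :=
      HasFDerivAt.prodMk hFd.fst (hasFDerivAt_snd)
    have hΨcq : ContDiffAt ℝ 1 Ψ q := hΨc.contDiffAt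
    -- the local inverse is C¹ at Ψ q = p
    have hloc : ContDiffAt ℝ 1 (hΨcq.localInverse hΨd one_ne_zero) (Ψ q) :=
      hΨcq.to_localInverse hΨd one_ne_zero
    have hev : Φ =ᶠ[nhds (Ψ q)] (hΨcq.localInverse hΨd one_ne_zero) := by
      have := (hΨcq.hasStrictFDerivAt' hΨd one_ne_zero).eventually_right_inverse
      filter_upwards [this] with y hy
      have hy' : Ψ (hΨcq.localInverse hΨd one_ne_zero y) = y := hy
      calc Φ y = Φ (Ψ (hΨcq.localInverse hΨd one_ne_zero y)) := by rw [hy']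
        _ = hΨcq.localInverse hΨd one_ne_zero y := hright _
    have : ContDiffAt ℝ 1 Φ (Ψ q) := hloc.congr_of_eventuallyEq hev
    rwa [hΨq] at this
  exact ⟨hΦc, ⟨hleft.injective, hright.surjective⟩, hΨc, hleft, hright⟩
end

section
/- Let F : X → Y be a flat map and g ∈ Y. Then the map H_g : V_X → X given by H_g(v) = v + (F_v)⁻¹(P_Y g) is a bijection from V_X onto the fiber α_g = F⁻¹(g + V_Y), with inverse given by the height map x ↦ Q_X x restricted to α_g. -/
/- Product model of the Banach space decompositions `X = W_X ⊕ V_X` and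
`Y = W_Y ⊕ V_Y`: `X = W × V`, `Y = W' × V'`, with `P_X = Prod.fst`,
`Q_X = Prod.snd`, `P_Y = Prod.fst`, `Q_Y = Prod.snd`. -/
variable {W V W' V' : Type*}
  [NormedAddCommGroup W] [NormedSpace ℝ W] [CompleteSpace W]
  [NormedAddCommGroup V] [NormedSpace ℝ V] [CompleteSpace V]
  [NormedAddCommGroup W'] [NormedSpace ℝ W'] [CompleteSpace W']
  [NormedAddCommGroup V'] [NormedSpace ℝ V'] [CompleteSpace V']

/-- for a flat map `F` and `g ∈ Y`, the map
`H_g : V_X → X`, `H_g v = v + F_v⁻¹(P_Y g)` (here `v ↦ (G v g.1, v)`), is a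
bijection from `V_X` onto the fiber `α_g = F⁻¹(g + V_Y)`, with inverse the
height map `x ↦ Q_X x` restricted to `α_g`. -/
theorem heightMap_bijection_fiber (F : W × V → W' × V') (G : V → W' → W)
    (hF : IsFlat F G) (g : W' × V') :
    Set.BijOn (fun v : V => ((G v g.1, v) : W × V)) Set.univ
      {x : W × V | (F x).1 = g.1} ∧
    (∀ x : W × V, (F x).1 = g.1 → (G x.2 g.1, x.2) = x) ∧
    Function.LeftInverse (Prod.snd : W × V → V) (fun v : V => (G v g.1, v)) := by
  obtain ⟨-, h⟩ := hF
  have key : ∀ x : W × V, (F x).1 = g.1 → (G x.2 g.1, x.2) = x := by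
    intro x hx
    have := (h x.2).2.2.1 x.1
    simp only [projRestr] at this
    rw [show ((x.1, x.2) : W × V) = x from rfl] at this
    rw [hx] at this
    exact Prod.ext this rfl
  refine ⟨⟨fun v _ => ?_, fun a _ b _ hab => ?_, fun x hx => ?_⟩, key, fun v => rfl⟩
  · have := (h v).2.2.2 g.1
    simpa [projRestr] using this
  · exact congrArg Prod.snd hab
  · exact ⟨x.2, trivial, key x hx⟩
end

section
/- Let Φ : X → Y be a C¹ map between Banach spaces such that DΦ(u) is invertible for every u ∈ X and there exists C > 0 with ‖DΦ(u)h‖ ≥ C‖h‖ for all u, h ∈ X. Then Φ is a global C¹ diffeomorphism from X onto Y (Hadamard's global inversion theorem under a uniform coercivity bound). -/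
open Set Filter Topology

section HadamardAux

set_option linter.unusedSectionVars false

variable {X Y : Type*}
    [NormedAddCommGroup X] [NormedSpace ℝ X] [CompleteSpace X]
    [NormedAddCommGroup Y] [NormedSpace ℝ Y] [CompleteSpace Y]
    {Φ : X → Y} {e : X → (X ≃L[ℝ] Y)}
    (hd : ∀ x, HasStrictFDerivAt Φ ((e x : X →L[ℝ] Y)) x)
    {C : ℝ} (hC : 0 < C) (hb : ∀ x h, C * ‖h‖ ≤ ‖e x h‖)

include hd in
theorem locInj : IsLocallyInjective Φ := by
  intro x
  refine ⟨((hd x).toOpenPartialHomeomorph Φ).source, ((hd x).toOpenPartialHomeomorph Φ).open_source,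
    (hd x).mem_toOpenPartialHomeomorph_source, ?_⟩
  have h1 : ((hd x).toOpenPartialHomeomorph Φ : X → Y) = Φ := (hd x).toOpenPartialHomeomorph_coe
  have := ((hd x).toOpenPartialHomeomorph Φ).injOn
  rwa [h1] at this

include hd in
theorem lift_unique {y₀ y₁ : Y} {τ : ℝ} (hτ : 0 ≤ τ) (c₁ c₂ : ℝ → X)
    (h₁ : ContinuousOn c₁ (Icc 0 τ)) (h₂ : ContinuousOn c₂ (Icc 0 τ))
    (hl₁ : ∀ t ∈ Icc 0 τ, Φ (c₁ t) = y₀ + t • (y₁ - y₀))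
    (hl₂ : ∀ t ∈ Icc 0 τ, Φ (c₂ t) = y₀ + t • (y₁ - y₀))
    (h0 : c₁ 0 = c₂ 0) : ∀ t ∈ Icc 0 τ, c₁ t = c₂ t := by
  have hsep : IsSeparatedMap Φ := T2Space.isSeparatedMap Φ
  exact hsep.eqOn_of_comp_eqOn (locInj hd) isPreconnected_Icc h₁ h₂
    (fun t ht => by simp only [Function.comp_apply, hl₁ t ht, hl₂ t ht])
    (left_mem_Icc.2 hτ) h0

include hd hC hb in
theorem lift_lip (y₀ y₁ : Y) (c : ℝ → X) {t₀ t₁ : ℝ} (hc : ContinuousOn c (Icc t₀ t₁))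
    (hl : ∀ t ∈ Icc t₀ t₁, Φ (c t) = y₀ + t • (y₁ - y₀)) :
    ∀ t ∈ Icc t₀ t₁, ∀ t' ∈ Icc t₀ t₁, ‖c t - c t'‖ ≤ (C⁻¹ * ‖y₁ - y₀‖) * ‖t - t'‖ := by
  set s : Set ℝ := Icc t₀ t₁
  set γ : ℝ → Y := fun t => y₀ + t • (y₁ - y₀) with hγ
  have hder : ∀ t ∈ s, HasDerivWithinAt c ((e (c t)).symm (y₁ - y₀)) s t := by
    intro t ht
    set p := c t
    set ch := (hd p).toOpenPartialHomeomorph Φ with hch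
    have hcoe : (ch : X → Y) = Φ := (hd p).toOpenPartialHomeomorph_coe
    have hsymm : HasStrictFDerivAt ch.symm ((e p).symm : Y →L[ℝ] X) (Φ p) := by
      have := (hd p).to_localInverse
      rwa [(hd p).localInverse_def] at this
    have hγt : ∀ r ∈ s, γ r = Φ (c r) := fun r hr => (hl r hr).symm
    have hγd : HasDerivAt γ (y₁ - y₀) t := by
      have : HasDerivAt (fun r : ℝ => r • (y₁ - y₀)) ((1:ℝ) • (y₁ - y₀)) t :=
        (hasDerivAt_id t).smul_const (y₁ - y₀)
      have h := this.const_add y₀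
      rw [one_smul] at h
      exact h
    have hcomp : HasDerivWithinAt (ch.symm ∘ γ) ((e p).symm (y₁ - y₀)) s t := by
      have h1 : HasFDerivAt ch.symm ((e p).symm : Y →L[ℝ] X) (γ t) := by
        rw [hγt t ht]; exact hsymm.hasFDerivAt
      exact h1.comp_hasDerivWithinAt t hγd.hasDerivWithinAt
    refine hcomp.congr_of_eventuallyEq ?_ ?_
    · have hmem : c ⁻¹' ch.source ∈ nhdsWithin t s :=
        hc t ht (ch.open_source.mem_nhds ((hd p).mem_toOpenPartialHomeomorph_source))
      filter_upwards [hmem, self_mem_nhdsWithin] with r hr hrs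
      have : ch.symm (Φ (c r)) = c r := by
        have := ch.left_inv hr
        rwa [hcoe] at this
      show c r = ch.symm (γ r)
      rw [hγt r hrs, this]
    · show c t = ch.symm (γ t)
      have := ch.left_inv (show p ∈ ch.source from (hd p).mem_toOpenPartialHomeomorph_source)
      rw [hcoe] at this
      rw [hγt t ht, this]
  have hbound : ∀ t ∈ s, ‖(e (c t)).symm (y₁ - y₀)‖ ≤ C⁻¹ * ‖y₁ - y₀‖ := by
    intro t _
    have := hb (c t) ((e (c t)).symm (y₁ - y₀))
    rw [(e (c t)).apply_symm_apply] at this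
    rw [inv_mul_eq_div, le_div_iff₀ hC]; linarith
  intro t ht t' ht'
  exact Convex.norm_image_sub_le_of_norm_hasDerivWithin_le hder hbound (convex_Icc t₀ t₁) ht' ht

include hd hC hb in
theorem lift_exists (x₀ : X) (y₁ : Y) :
    ∃ c : ℝ → X, Continuous c ∧ c 0 = x₀ ∧
      ∀ t ∈ Icc (0:ℝ) 1, Φ (c t) = Φ x₀ + t • (y₁ - Φ x₀) := by
  set y₀ := Φ x₀ with hy₀
  set γ : ℝ → Y := fun t => y₀ + t • (y₁ - y₀) with hγ
  set K := C⁻¹ * ‖y₁ - y₀‖ with hK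
  have hK0 : 0 ≤ K := mul_nonneg (inv_nonneg.2 hC.le) (norm_nonneg _)
  have hΦc : Continuous Φ := continuous_iff_continuousAt.2 fun x =>
    (hd x).hasFDerivAt.continuousAt
  have hγc : Continuous γ := by
    have : Continuous fun t : ℝ => y₀ + t • (y₁ - y₀) := by fun_prop
    rwa [← hγ] at this
  set T : Set ℝ := {τ | τ ∈ Icc (0:ℝ) 1 ∧ ∃ c : ℝ → X, Continuous c ∧ c 0 = x₀ ∧
    ∀ t ∈ Icc 0 τ, Φ (c t) = γ t} with hT
  have h0T : (0:ℝ) ∈ T := by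
    refine ⟨⟨le_refl 0, zero_le_one⟩, fun _ => x₀, continuous_const, rfl, ?_⟩
    intro t ht
    rw [mem_Icc] at ht
    have h : t = 0 := le_antisymm ht.2 ht.1
    simp [h, hγ, hy₀]
  have hbdd : BddAbove T := ⟨1, fun τ hτ => hτ.1.2⟩
  set τs := sSup T with hτs
  have hτs0 : 0 ≤ τs := le_csSup hbdd h0T
  have hτs1 : τs ≤ 1 := csSup_le ⟨0, h0T⟩ fun τ hτ => hτ.1.2
  -- Step 1 : τs ∈ T
  have hstep1 : τs ∈ T := by
    rcases eq_or_lt_of_le hτs0 with h | hpos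
    · rwa [← h]
    have main : ∀ t : ℝ, ∃ x : X, t ∈ Ico 0 τs →
        ((∀ τ ∈ T, ∀ c : ℝ → X, Continuous c → c 0 = x₀ →
          (∀ r ∈ Icc 0 τ, Φ (c r) = γ r) → t ≤ τ → c t = x) ∧
        Φ x = γ t ∧ (t = 0 → x = x₀)) := by
      intro t
      by_cases ht : t ∈ Ico 0 τs
      · obtain ⟨τ, hτT, htτ⟩ := exists_lt_of_lt_csSup ⟨0, h0T⟩ ht.2
        obtain ⟨hτI, c, hc, hc0, hcl⟩ := hτT
        refine ⟨c t, fun _ => ⟨?_, hcl t ⟨ht.1, htτ.le⟩, fun h => by rw [h, hc0]⟩⟩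
        intro τ' hτ'T c' hc' hc'0 hc'l htτ'
        have hmin : ∀ r ∈ Icc (0:ℝ) (min τ τ'), Φ (c r) = γ r := fun r hr =>
          hcl r ⟨hr.1, hr.2.trans (min_le_left _ _)⟩
        have hmin' : ∀ r ∈ Icc (0:ℝ) (min τ τ'), Φ (c' r) = γ r := fun r hr =>
          hc'l r ⟨hr.1, hr.2.trans (min_le_right _ _)⟩
        have h0m : (0:ℝ) ≤ min τ τ' := le_min hτI.1 hτ'T.1.1
        have := lift_unique hd (y₀ := y₀) (y₁ := y₁) h0m c' c hc'.continuousOn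
          hc.continuousOn hmin' hmin (by rw [hc0, hc'0])
        exact this t ⟨ht.1, le_min htτ.le htτ'⟩
      · exact ⟨x₀, fun h => absurd h ht⟩
    choose cc hcc using main
    have hccγ : ∀ t ∈ Ico 0 τs, Φ (cc t) = γ t := fun t ht => ((hcc t) ht).2.1
    have hcc0 : cc 0 = x₀ := ((hcc 0) ⟨le_refl 0, hpos⟩).2.2 rfl
    have hlipcc : ∀ t ∈ Ico 0 τs, ∀ t' ∈ Ico 0 τs, ‖cc t - cc t'‖ ≤ K * ‖t - t'‖ := by
      intro t ht t' ht'
      obtain ⟨τ, hτT, hlt⟩ := exists_lt_of_lt_csSup ⟨0, h0T⟩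
        (show max t t' < τs from max_lt_iff.2 ⟨ht.2, ht'.2⟩)
      obtain ⟨hτI, c, hc, hc0, hcl⟩ := hτT
      have h1 : cc t = c t := (((hcc t) ht).1 τ ⟨hτI, c, hc, hc0, hcl⟩ c hc hc0 hcl
        ((le_max_left _ _).trans hlt.le)).symm
      have h2 : cc t' = c t' := (((hcc t') ht').1 τ ⟨hτI, c, hc, hc0, hcl⟩ c hc hc0 hcl
        ((le_max_right _ _).trans hlt.le)).symm
      rw [h1, h2]
      exact lift_lip hd hC hb y₀ y₁ c hc.continuousOn hcl t
        ⟨ht.1, ((le_max_left t t').trans hlt.le)⟩ t'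
        ⟨ht'.1, ((le_max_right t t').trans hlt.le)⟩
    -- Cauchy sequence towards τs
    set sn : ℕ → ℝ := fun n => τs - τs / (n + 2) with hsn
    have hsnle : ∀ n m : ℕ, (n:ℝ) ≤ m → τs / ((m:ℝ) + 2) ≤ τs / ((n:ℝ) + 2) := by
      intro n m hnm
      apply div_le_div_of_nonneg_left hτs0 (by positivity) (by linarith)
    have hsnmem : ∀ n, sn n ∈ Ico 0 τs := by
      intro n
      have hn0 : (0:ℝ) ≤ (n:ℝ) := Nat.cast_nonneg n
      have hle : τs / ((n:ℝ) + 2) ≤ τs := div_le_self hτs0 (by linarith)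
      have hgt : 0 < τs / ((n:ℝ) + 2) := by positivity
      exact ⟨by simp only [hsn]; linarith, by simp only [hsn]; linarith⟩
    have hdivlim : Tendsto (fun n : ℕ => τs / ((n:ℝ) + 2)) atTop (𝓝 0) := by
      apply Tendsto.div_atTop tendsto_const_nhds
      exact tendsto_atTop_add_const_right atTop 2 tendsto_natCast_atTop_atTop
    have hsnlim : Tendsto sn atTop (𝓝 τs) := by
      have := (tendsto_const_nhds : Tendsto (fun _ : ℕ => τs) atTop (𝓝 τs)).sub hdivlim
      simpa using this
    have hcauchy : CauchySeq (fun n => cc (sn n)) := by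
      refine cauchySeq_of_le_tendsto_0 (fun N => K * (τs / ((N:ℝ) + 2))) ?_ ?_
      · intro n m N hn hm
        rw [dist_eq_norm]
        have h1 : ‖cc (sn n) - cc (sn m)‖ ≤ K * ‖sn n - sn m‖ :=
          hlipcc _ (hsnmem n) _ (hsnmem m)
        refine h1.trans (mul_le_mul_of_nonneg_left ?_ hK0)
        have e1 : sn n - sn m = τs / ((m:ℝ) + 2) - τs / ((n:ℝ) + 2) := by
          simp only [hsn]; ring
        have b1 : τs / ((m:ℝ) + 2) ≤ τs / ((N:ℝ) + 2) := hsnle N m (by exact_mod_cast hm)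
        have b2 : τs / ((n:ℝ) + 2) ≤ τs / ((N:ℝ) + 2) := hsnle N n (by exact_mod_cast hn)
        have p1 : 0 ≤ τs / ((m:ℝ) + 2) := by positivity
        have p2 : 0 ≤ τs / ((n:ℝ) + 2) := by positivity
        rw [Real.norm_eq_abs, e1, abs_sub_le_iff]
        constructor <;> linarith
      · have := (tendsto_const_nhds : Tendsto (fun _ : ℕ => K) atTop (𝓝 K)).mul hdivlim
        simpa using this
    obtain ⟨l, hl⟩ := cauchySeq_tendsto_of_complete hcauchy
    set cfin : ℝ → X := fun t => if t < τs then cc (max t 0) else l with hcfin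
    have hmaxmem : ∀ t : ℝ, t < τs → max t 0 ∈ Ico 0 τs :=
      fun t ht => ⟨le_max_right _ _, max_lt ht hpos⟩
    have hend : ∀ t : ℝ, t < τs → ‖cc (max t 0) - l‖ ≤ K * (τs - t) := by
      intro t ht
      have hlim1 : Tendsto (fun n => ‖cc (max t 0) - cc (sn n)‖) atTop
          (𝓝 ‖cc (max t 0) - l‖) := ((tendsto_const_nhds.sub hl).norm)
      have hlim2 : Tendsto (fun n => K * ‖max t 0 - sn n‖) atTop
          (𝓝 (K * ‖max t 0 - τs‖)) := ((tendsto_const_nhds.sub hsnlim).norm).const_mul K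
      have hle := le_of_tendsto_of_tendsto' hlim1 hlim2
        (fun n => hlipcc _ (hmaxmem t ht) _ (hsnmem n))
      refine hle.trans (mul_le_mul_of_nonneg_left ?_ hK0)
      rw [Real.norm_eq_abs, abs_of_nonpos (by linarith [max_lt ht hpos])]
      have : t ≤ max t 0 := le_max_left _ _
      linarith
    have hpair : ∀ t t', t < τs → ¬ t' < τs → ‖cfin t - cfin t'‖ ≤ K * ‖t - t'‖ := by
      intro t t' ht ht'
      push_neg at ht'
      show ‖(if t < τs then cc (max t 0) else l) - (if t' < τs then cc (max t' 0) else l)‖ ≤ _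
      rw [if_pos ht, if_neg (not_lt.2 ht')]
      refine (hend t ht).trans (mul_le_mul_of_nonneg_left ?_ hK0)
      rw [Real.norm_eq_abs, abs_of_nonpos (by linarith)]
      linarith
    have hlipfin : ∀ t t', ‖cfin t - cfin t'‖ ≤ K * ‖t - t'‖ := by
      intro t t'
      by_cases h1 : t < τs <;> by_cases h2 : t' < τs
      · show ‖(if t < τs then cc (max t 0) else l) - (if t' < τs then cc (max t' 0) else l)‖ ≤ _
        rw [if_pos h1, if_pos h2]
        refine (hlipcc _ (hmaxmem t h1) _ (hmaxmem t' h2)).trans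
          (mul_le_mul_of_nonneg_left ?_ hK0)
        rw [Real.norm_eq_abs, Real.norm_eq_abs]
        exact abs_max_sub_max_le_abs t t' 0
      · exact hpair t t' h1 h2
      · rw [norm_sub_rev, norm_sub_rev t] ; exact hpair t' t h2 h1
      · show ‖(if t < τs then cc (max t 0) else l) - (if t' < τs then cc (max t' 0) else l)‖ ≤ _
        rw [if_neg h1, if_neg h2, sub_self, norm_zero]
        positivity
    have hcontfin : Continuous cfin := by
      apply LipschitzWith.continuous (K := Real.toNNReal K)
      apply LipschitzWith.of_dist_le_mul
      intro t t'
      rw [dist_eq_norm, dist_eq_norm, Real.coe_toNNReal K hK0]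
      exact hlipfin t t'
    refine ⟨⟨hτs0, hτs1⟩, cfin, hcontfin, ?_, ?_⟩
    · show (if (0:ℝ) < τs then cc (max 0 0) else l) = x₀
      rw [if_pos hpos]; simpa using hcc0
    · intro t ht
      by_cases hlt : t < τs
      · show Φ (if t < τs then cc (max t 0) else l) = γ t
        rw [if_pos hlt, max_eq_left ht.1]
        exact hccγ t ⟨ht.1, hlt⟩
      · have htt : t = τs := le_antisymm ht.2 (not_lt.1 hlt)
        show Φ (if t < τs then cc (max t 0) else l) = γ t
        rw [if_neg hlt, htt]
        have h1 : Tendsto (fun n => Φ (cc (sn n))) atTop (𝓝 (Φ l)) :=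
          (hΦc.continuousAt.tendsto.comp hl)
        have h2 : Tendsto (fun n => Φ (cc (sn n))) atTop (𝓝 (γ τs)) := by
          have : ∀ n, Φ (cc (sn n)) = γ (sn n) := fun n => hccγ _ (hsnmem n)
          simp only [this]
          exact hγc.continuousAt.tendsto.comp hsnlim
        exact tendsto_nhds_unique h1 h2
  -- Step 2 : τs = 1
  have hstep2 : τs = 1 := by
    by_contra hne
    have hlt1 : τs < 1 := lt_of_le_of_ne hτs1 hne
    obtain ⟨hI, c, hc, hc0, hcl⟩ := hstep1
    set x₁ := c τs with hx₁
    set ch := (hd x₁).toOpenPartialHomeomorph Φ with hch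
    have hcoe : (ch : X → Y) = Φ := (hd x₁).toOpenPartialHomeomorph_coe
    have hx₁s : x₁ ∈ ch.source := (hd x₁).mem_toOpenPartialHomeomorph_source
    have hγτs : γ τs = Φ x₁ := (hcl τs ⟨hτs0, le_refl _⟩).symm
    have htgt : γ τs ∈ ch.target := by rw [hγτs]; exact ch.map_source hx₁s
    have hnh : γ ⁻¹' ch.target ∈ 𝓝 τs := hγc.continuousAt (ch.open_target.mem_nhds htgt)
    obtain ⟨η, hη0, hηsub⟩ := Metric.mem_nhds_iff.1 hnh
    set τ' := min (τs + η/2) 1 with hτ'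
    have hτ'1 : τ' ≤ 1 := min_le_right _ _
    have hτ'gt : τs < τ' := lt_min (by linarith) hlt1
    have hτ'le : τ' ≤ τs + η/2 := min_le_left _ _
    have hmemtgt : ∀ t ∈ Icc τs τ', γ t ∈ ch.target := by
      intro t ht
      apply hηsub
      rw [Metric.mem_ball, Real.dist_eq, abs_of_nonneg (by linarith [ht.1])]
      have := ht.2
      linarith
    set g : ℝ → X := fun t => ch.symm (γ (max τs (min t τ'))) with hg
    have hclampmem : ∀ t : ℝ, max τs (min t τ') ∈ Icc τs τ' := fun t =>
      ⟨le_max_left _ _, max_le hτ'gt.le (min_le_right _ _)⟩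
    have hgc : Continuous g := by
      apply ch.continuousOn_symm.comp_continuous
      · exact hγc.comp (continuous_const.max (continuous_id.min continuous_const))
      · intro t; exact hmemtgt _ (hclampmem t)
    have hbdry : ∀ t : ℝ, t = τs → c t = g t := by
      intro t ht
      rw [ht]
      have hgτs : g τs = x₁ := by
        show ch.symm (γ (max τs (min τs τ'))) = x₁
        rw [min_eq_left hτ'gt.le, max_self, hγτs]
        have := ch.left_inv hx₁s
        rwa [hcoe] at this
      rw [hgτs]
    set c' : ℝ → X := fun t => if t ≤ τs then c t else g t with hc'
    have hc'c : Continuous c' :=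
      Continuous.if_le hc hgc continuous_id continuous_const hbdry
    have hτ'T : τ' ∈ T := by
      refine ⟨⟨hτs0.trans hτ'gt.le, hτ'1⟩, c', hc'c, ?_, ?_⟩
      · show (if (0:ℝ) ≤ τs then c 0 else g 0) = x₀
        rw [if_pos hτs0, hc0]
      · intro t ht
        by_cases h : t ≤ τs
        · show Φ (if t ≤ τs then c t else g t) = γ t
          rw [if_pos h]; exact hcl t ⟨ht.1, h⟩
        · push_neg at h
          show Φ (if t ≤ τs then c t else g t) = γ t
          rw [if_neg (not_le.2 h)]
          have hclamp : max τs (min t τ') = t := by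
            rw [min_eq_left ht.2, max_eq_right h.le]
          show Φ (ch.symm (γ (max τs (min t τ')))) = γ t
          rw [hclamp]
          have := ch.right_inv (hmemtgt t ⟨h.le, ht.2⟩)
          rwa [hcoe] at this
    exact absurd (le_csSup hbdd hτ'T) (not_le.2 hτ'gt)
  rw [hstep2] at hstep1
  obtain ⟨_, c, hc, hc0, hcl⟩ := hstep1
  exact ⟨c, hc, hc0, hcl⟩

include hd hC hb in
theorem phi_inj : Function.Injective Φ := by
  intro a b hab
  have hΦc : Continuous Φ := continuous_iff_continuousAt.2 fun x =>
    (hd x).hasFDerivAt.continuousAt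
  have hsep : IsSeparatedMap Φ := T2Space.isSeparatedMap Φ
  set y₀ := Φ a with hy₀
  set α : ℝ → X := fun s => a + s • (b - a) with hα
  have hαc : Continuous α := by fun_prop
  have hα0 : α 0 = a := by simp [hα]
  have hα1 : α 1 = b := by simp [hα]
  set γ : ℝ → ℝ → Y := fun s t => Φ (α s) + t • (y₀ - Φ (α s)) with hγdef
  have hLL : ∀ s : ℝ, ∃ c : ℝ → X, Continuous c ∧ c 0 = α s ∧
      ∀ t ∈ Icc (0:ℝ) 1, Φ (c t) = γ s t := fun s => lift_exists hd hC hb (α s) y₀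
  choose L hLc hL0 hLl using hLL
  have hLlip : ∀ s : ℝ, ∀ t ∈ Icc (0:ℝ) 1, ∀ t' ∈ Icc (0:ℝ) 1,
      ‖L s t - L s t'‖ ≤ (C⁻¹ * ‖y₀ - Φ (α s)‖) * ‖t - t'‖ := fun s =>
    lift_lip hd hC hb (Φ (α s)) y₀ (L s) (hLc s).continuousOn (hLl s)
  set F : ℝ → X := fun s => L s 1 with hF
  -- `L` is jointly "continuous in s, uniformly in t" : clopen argument
  have key : ∀ s₀ : ℝ, ∀ ε > 0, ∃ δ > 0, ∀ s, |s - s₀| < δ →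
      ∀ t ∈ Icc (0:ℝ) 1, ‖L s t - L s₀ t‖ < ε := by
    intro s₀
    -- uniform Lipschitz constant near s₀
    obtain ⟨sm, _, hsm⟩ := (isCompact_Icc (a := s₀ - 1) (b := s₀ + 1)).exists_isMaxOn
      ⟨s₀, by constructor <;> linarith⟩
      (Continuous.continuousOn (by fun_prop : Continuous fun s => ‖y₀ - Φ (α s)‖))
    rw [isMaxOn_iff] at hsm
    set K := C⁻¹ * ‖y₀ - Φ (α sm)‖ with hKdef
    have hK0 : 0 ≤ K := mul_nonneg (inv_nonneg.2 hC.le) (norm_nonneg _)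
    have hlips : ∀ s : ℝ, |s - s₀| ≤ 1 → ∀ t ∈ Icc (0:ℝ) 1, ∀ t' ∈ Icc (0:ℝ) 1,
        ‖L s t - L s t'‖ ≤ K * ‖t - t'‖ := by
      intro s hs t ht t' ht'
      refine (hLlip s t ht t' ht').trans (mul_le_mul_of_nonneg_right ?_ (norm_nonneg _))
      have hmem : s ∈ Icc (s₀ - 1) (s₀ + 1) := by
        rw [abs_le] at hs; constructor <;> linarith [hs.1, hs.2]
      exact mul_le_mul_of_nonneg_left (hsm s hmem) (inv_nonneg.2 hC.le)
    set A : Set ℝ := {τ | τ ∈ Icc (0:ℝ) 1 ∧ ∀ ε > 0, ∃ δ > 0, ∀ s, |s - s₀| < δ →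
      ∀ t ∈ Icc 0 τ, ‖L s t - L s₀ t‖ < ε} with hA
    have h0A : (0:ℝ) ∈ A := by
      refine ⟨⟨le_refl 0, zero_le_one⟩, ?_⟩
      intro ε hε
      refine ⟨ε / (‖b - a‖ + 1), by positivity, ?_⟩
      intro s hs t ht
      have ht0 : t = 0 := le_antisymm ht.2 ht.1
      rw [ht0, hL0 s, hL0 s₀]
      have : α s - α s₀ = (s - s₀) • (b - a) := by simp [hα]; module
      rw [this, norm_smul, Real.norm_eq_abs]
      calc |s - s₀| * ‖b - a‖ ≤ |s - s₀| * (‖b - a‖ + 1) :=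
            mul_le_mul_of_nonneg_left (by linarith) (abs_nonneg _)
        _ < (ε / (‖b - a‖ + 1)) * (‖b - a‖ + 1) :=
            mul_lt_mul_of_pos_right hs (by positivity)
        _ = ε := by field_simp
    have hbddA : BddAbove A := ⟨1, fun τ hτ => hτ.1.2⟩
    set τA := sSup A with hτA
    have hτA0 : 0 ≤ τA := le_csSup hbddA h0A
    have hτA1 : τA ≤ 1 := csSup_le ⟨0, h0A⟩ fun τ hτ => hτ.1.2
    have hstep1 : τA ∈ A := by
      refine ⟨⟨hτA0, hτA1⟩, ?_⟩
      intro ε hε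
      obtain ⟨τ, hτA', hτgt⟩ := exists_lt_of_lt_csSup ⟨0, h0A⟩
        (show τA - ε / (3 * (K + 1)) < τA by
          have : 0 < ε / (3 * (K + 1)) := by positivity
          linarith)
      have hττA : τ ≤ τA := le_csSup hbddA hτA'
      obtain ⟨δ, hδ0, hδ⟩ := hτA'.2 (ε / 3) (by positivity)
      refine ⟨min δ 1, by positivity, ?_⟩
      intro s hs t ht
      have hs1 : |s - s₀| < δ := lt_of_lt_of_le hs (min_le_left _ _)
      have hs2 : |s - s₀| ≤ 1 := (lt_of_lt_of_le hs (min_le_right _ _)).le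
      by_cases hcase : t ≤ τ
      · exact lt_of_lt_of_le (hδ s hs1 t ⟨ht.1, hcase⟩) (by linarith)
      · push_neg at hcase
        have hτ0 : 0 ≤ τ := hτA'.1.1
        have hτ1 : τ ≤ 1 := hτA'.1.2
        have htI : t ∈ Icc (0:ℝ) 1 := ⟨ht.1, ht.2.trans hτA1⟩
        have hτI : τ ∈ Icc (0:ℝ) 1 := ⟨hτ0, hτ1⟩
        have h1 : ‖L s t - L s τ‖ ≤ K * ‖t - τ‖ := hlips s hs2 t htI τ hτI
        have h2 : ‖L s₀ t - L s₀ τ‖ ≤ K * ‖t - τ‖ := hlips s₀ (by simp) t htI τ hτI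
        have h3 : ‖L s τ - L s₀ τ‖ < ε / 3 := hδ s hs1 τ ⟨hτ0, le_refl τ⟩
        have hKt : K * ‖t - τ‖ ≤ ε / 3 := by
          rw [Real.norm_eq_abs, abs_of_pos (by linarith)]
          have ht2 : t - τ ≤ ε / (3 * (K + 1)) := by
            have := ht.2; linarith
          calc K * (t - τ) ≤ K * (ε / (3 * (K + 1))) :=
                mul_le_mul_of_nonneg_left ht2 hK0
            _ ≤ (K + 1) * (ε / (3 * (K + 1))) := by
                apply mul_le_mul_of_nonneg_right (by linarith) (by positivity)
            _ = ε / 3 := by field_simp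
        calc ‖L s t - L s₀ t‖
            ≤ ‖L s t - L s τ‖ + ‖L s τ - L s₀ τ‖ + ‖L s₀ τ - L s₀ t‖ := by
              have := norm_add₃_le (a := L s t - L s τ) (b := L s τ - L s₀ τ)
                (c := L s₀ τ - L s₀ t)
              simpa using this
          _ < ε / 3 + ε / 3 + ε / 3 := by
              have h2' : ‖L s₀ τ - L s₀ t‖ ≤ K * ‖t - τ‖ := by
                rw [norm_sub_rev]; exact h2
              apply add_lt_add_of_lt_of_le (add_lt_add_of_le_of_lt (h1.trans hKt) h3)
              exact h2'.trans hKt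
          _ = ε := by ring
    have hstep2 : τA = 1 := by
      by_contra hne
      have hlt1 : τA < 1 := lt_of_le_of_ne hτA1 hne
      set x₁ := L s₀ τA with hx₁
      set ch := (hd x₁).toOpenPartialHomeomorph Φ with hch
      have hcoe : (ch : X → Y) = Φ := (hd x₁).toOpenPartialHomeomorph_coe
      have hx₁s : x₁ ∈ ch.source := (hd x₁).mem_toOpenPartialHomeomorph_source
      have hτAI : τA ∈ Icc (0:ℝ) 1 := ⟨hτA0, hτA1⟩
      have hγx₁ : γ s₀ τA = Φ x₁ := (hLl s₀ τA hτAI).symm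
      set G : ℝ × ℝ → Y := fun p => Φ (α p.1) + p.2 • (y₀ - Φ (α p.1)) with hG
      have hGc : Continuous G := by fun_prop
      have hGγ : ∀ s t, G (s, t) = γ s t := fun s t => rfl
      have hWopen : IsOpen (G ⁻¹' ch.target) := ch.open_target.preimage hGc
      have hWmem : (s₀, τA) ∈ G ⁻¹' ch.target := by
        show G (s₀, τA) ∈ ch.target
        rw [hGγ, hγx₁]
        exact ch.map_source hx₁s
      obtain ⟨ρ, hρ0, hρsub⟩ := Metric.mem_nhds_iff.1 (hWopen.mem_nhds hWmem)
      set τ' := min (τA + ρ/2) 1 with hτ'def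
      have hτ'1 : τ' ≤ 1 := min_le_right _ _
      have hτ'gt : τA < τ' := lt_min (by linarith) hlt1
      have hτ'le : τ' ≤ τA + ρ/2 := min_le_left _ _
      have hGtgt : ∀ s, |s - s₀| < ρ/2 → ∀ t ∈ Icc τA τ', G (s, t) ∈ ch.target := by
        intro s hs t ht
        apply hρsub
        rw [Metric.mem_ball, Prod.dist_eq]
        apply max_lt
        · rw [Real.dist_eq]; linarith
        · rw [Real.dist_eq, abs_of_nonneg (by linarith [ht.1])]
          have := ht.2
          linarith
      obtain ⟨r, hr0, hrsub⟩ := Metric.mem_nhds_iff.1 (ch.open_source.mem_nhds hx₁s)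
      obtain ⟨δ₁, hδ₁0, hδ₁⟩ := hstep1.2 r hr0
      have hLsrc : ∀ s, |s - s₀| < δ₁ → L s τA ∈ ch.source := by
        intro s hs
        apply hrsub
        rw [Metric.mem_ball, dist_eq_norm]
        exact hδ₁ s hs τA ⟨hτA0, le_refl _⟩
      have hLeq : ∀ s, |s - s₀| < min δ₁ (ρ/2) → ∀ t ∈ Icc τA τ',
          L s t = ch.symm (G (s, t)) := by
        intro s hs
        have hs1 : |s - s₀| < δ₁ := lt_of_lt_of_le hs (min_le_left _ _)
        have hs2 : |s - s₀| < ρ/2 := lt_of_lt_of_le hs (min_le_right _ _)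
        have hIccsub : Icc τA τ' ⊆ Icc (0:ℝ) 1 := Icc_subset_Icc hτA0 hτ'1
        have heq := hsep.eqOn_of_comp_eqOn (locInj hd) (isPreconnected_Icc (a := τA) (b := τ'))
          (hLc s).continuousOn
          (show ContinuousOn (fun t => ch.symm (G (s, t))) (Icc τA τ') from
            ch.continuousOn_symm.comp
              (hGc.comp (by fun_prop : Continuous fun t : ℝ => ((s:ℝ), t))).continuousOn
              (fun t ht => hGtgt s hs2 t ht))
          (fun t ht => by
            show Φ (L s t) = Φ (ch.symm (G (s, t)))
            rw [hLl s t (hIccsub ht)]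
            have h := ch.right_inv (hGtgt s hs2 t ht)
            rw [hcoe] at h
            rw [h])
          (left_mem_Icc.2 hτ'gt.le)
          (by
            show L s τA = ch.symm (G (s, τA))
            have hG0 : G (s, τA) = Φ (L s τA) := (hLl s τA hτAI).symm
            rw [hG0]
            have h := ch.left_inv (hLsrc s hs1)
            rw [hcoe] at h
            exact h.symm)
        exact fun t ht => heq ht
      set φ : ℝ × ℝ → X := fun p => ch.symm (G p) with hφ
      have hφcont : ContinuousOn φ (G ⁻¹' ch.target) :=
        ch.continuousOn_symm.comp hGc.continuousOn (fun p hp => hp)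
      have tube : ∀ ε > 0, ∃ δ > 0, ∀ s, |s - s₀| < δ → ∀ t ∈ Icc τA τ',
          ‖φ (s, t) - φ (s₀, t)‖ < ε := by
        intro ε hε
        set U₀ := (G ⁻¹' ch.target) ∩
          ((fun p : ℝ × ℝ => ((s₀:ℝ), p.2)) ⁻¹' (G ⁻¹' ch.target)) with hU₀
        have hU₀open : IsOpen U₀ := hWopen.inter (hWopen.preimage (by fun_prop))
        have hψ : ContinuousOn (fun p : ℝ × ℝ => ‖φ p - φ (s₀, p.2)‖) U₀ := by
          apply ContinuousOn.norm
          apply ContinuousOn.sub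
          · exact hφcont.mono inter_subset_left
          · exact hφcont.comp
              (by fun_prop : Continuous fun p : ℝ × ℝ => ((s₀:ℝ), p.2)).continuousOn
              (fun p hp => hp.2)
        set V := U₀ ∩ ((fun p : ℝ × ℝ => ‖φ p - φ (s₀, p.2)‖) ⁻¹' (Iio ε)) with hV
        have hVopen : IsOpen V := hψ.isOpen_inter_preimage hU₀open isOpen_Iio
        have hKV : ({s₀} ×ˢ Icc τA τ') ⊆ V := by
          rintro ⟨s, t⟩ ⟨hs, ht⟩
          rw [mem_singleton_iff] at hs
          subst hs
          have hmem : (s, t) ∈ G ⁻¹' ch.target :=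
            hGtgt s (by rw [sub_self, abs_zero]; positivity) t ht
          exact ⟨⟨hmem, hmem⟩, by
            show ‖φ (s, t) - φ (s, t)‖ < ε
            rw [sub_self, norm_zero]; exact hε⟩
        obtain ⟨u, v, huo, _, hsu, hvv, huv⟩ :=
          generalized_tube_lemma isCompact_singleton isCompact_Icc hVopen hKV
        obtain ⟨δ₂, hδ₂0, hδ₂sub⟩ := Metric.mem_nhds_iff.1 (huo.mem_nhds (hsu rfl))
        refine ⟨δ₂, hδ₂0, ?_⟩
        intro s hs t ht
        have hmemV : (s, t) ∈ V := huv
          ⟨hδ₂sub (by rw [Metric.mem_ball, Real.dist_eq]; exact hs), hvv ht⟩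
        exact hmemV.2
      have hτ'A : τ' ∈ A := by
        refine ⟨⟨hτA0.trans hτ'gt.le, hτ'1⟩, ?_⟩
        intro ε hε
        obtain ⟨δa, hδa0, hδa⟩ := hstep1.2 ε hε
        obtain ⟨δ₂, hδ₂0, hδ₂⟩ := tube ε hε
        refine ⟨min (min δa δ₁) (min (ρ/2) δ₂),
          lt_min (lt_min hδa0 hδ₁0) (lt_min (half_pos hρ0) hδ₂0), ?_⟩
        intro s hs t ht
        have hsa : |s - s₀| < δa :=
          lt_of_lt_of_le hs ((min_le_left _ _).trans (min_le_left _ _))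
        have hs1 : |s - s₀| < δ₁ :=
          lt_of_lt_of_le hs ((min_le_left _ _).trans (min_le_right _ _))
        have hsρ : |s - s₀| < ρ/2 :=
          lt_of_lt_of_le hs ((min_le_right _ _).trans (min_le_left _ _))
        have hsδ₂ : |s - s₀| < δ₂ :=
          lt_of_lt_of_le hs ((min_le_right _ _).trans (min_le_right _ _))
        by_cases hcase : t ≤ τA
        · exact hδa s hsa t ⟨ht.1, hcase⟩
        · push_neg at hcase
          have htI : t ∈ Icc τA τ' := ⟨hcase.le, ht.2⟩
          have e1 : L s t = φ (s, t) := hLeq s (lt_min_iff.2 ⟨hs1, hsρ⟩) t htI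
          have e2 : L s₀ t = φ (s₀, t) := hLeq s₀
            (by rw [sub_self, abs_zero]; exact lt_min hδ₁0 (half_pos hρ0)) t htI
          rw [e1, e2]
          exact hδ₂ s hsδ₂ t htI
      exact absurd (le_csSup hbddA hτ'A) (not_le.2 hτ'gt)
    have h1A : (1:ℝ) ∈ A := by rw [← hstep2]; exact hstep1
    exact h1A.2
  -- conclusion : endpoint map is continuous, hence constant
  have hFcont : Continuous F := by
    rw [continuous_iff_continuousAt]
    intro s₀
    rw [Metric.continuousAt_iff]
    intro ε hε
    obtain ⟨δ, hδ0, hδ⟩ := key s₀ ε hε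
    refine ⟨δ, hδ0, ?_⟩
    intro s hs
    rw [dist_eq_norm]
    exact hδ s (by rwa [Real.dist_eq] at hs) 1 ⟨zero_le_one, le_refl 1⟩
  have hΦF : ∀ s, Φ (F s) = y₀ := by
    intro s
    show Φ (L s 1) = y₀
    rw [hLl s 1 ⟨zero_le_one, le_refl 1⟩]
    show Φ (α s) + (1:ℝ) • (y₀ - Φ (α s)) = y₀
    rw [one_smul]
    abel
  have hF0 : F 0 = a := by
    have hγ0 : ∀ t ∈ Icc (0:ℝ) 1, Φ ((fun _ => a) t) = Φ (α 0) + t • (y₀ - Φ (α 0)) := by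
      intro t _
      rw [hα0]
      show Φ a = Φ a + t • (y₀ - Φ a)
      rw [← hy₀]
      simp
    have := lift_unique hd (y₀ := Φ (α 0)) (y₁ := y₀) zero_le_one (L 0) (fun _ => a)
      (hLc 0).continuousOn continuous_const.continuousOn
      (fun t ht => hLl 0 t ht) hγ0 (by rw [hL0, hα0])
    exact this 1 ⟨zero_le_one, le_refl 1⟩
  have hF1 : F 1 = b := by
    have hγ1 : ∀ t ∈ Icc (0:ℝ) 1, Φ ((fun _ => b) t) = Φ (α 1) + t • (y₀ - Φ (α 1)) := by
      intro t _
      rw [hα1]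
      show Φ b = Φ b + t • (y₀ - Φ b)
      rw [← hab]
      simp
    have := lift_unique hd (y₀ := Φ (α 1)) (y₁ := y₀) zero_le_one (L 1) (fun _ => b)
      (hLc 1).continuousOn continuous_const.continuousOn
      (fun t ht => hLl 1 t ht) hγ1 (by rw [hL0, hα1])
    exact this 1 ⟨zero_le_one, le_refl 1⟩
  have hconst := hsep.const_of_comp (locInj hd) hFcont
    (fun s s' => by rw [hΦF s, hΦF s']) 0 1
  rw [hF0, hF1] at hconst
  exact hconst

include hd hC hb in
theorem phi_surj : Function.Surjective Φ := by
  intro y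
  obtain ⟨c, _, _, hcl⟩ := lift_exists hd hC hb 0 y
  refine ⟨c 1, ?_⟩
  rw [hcl 1 ⟨zero_le_one, le_refl 1⟩, one_smul]
  abel

end HadamardAux

/-- Hadamard's global inversion theorem with a uniform coercivity
bound: if `Φ : X → Y` is a `C¹` map between Banach spaces whose derivative
`DΦ(u)` is invertible (as a continuous linear isomorphism) at every `u`, and
there is `C > 0` with `‖DΦ(u) h‖ ≥ C ‖h‖` for all `u, h`, then `Φ` is a global
`C¹` diffeomorphism from `X` onto `Y`. -/
theorem hadamard_global_inversion {X Y : Type*}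
    [NormedAddCommGroup X] [NormedSpace ℝ X] [CompleteSpace X]
    [NormedAddCommGroup Y] [NormedSpace ℝ Y] [CompleteSpace Y]
    (Φ : X → Y) (hΦ : ContDiff ℝ 1 Φ)
    (hinv : ∀ u : X, ∃ e : X ≃L[ℝ] Y, (e : X →L[ℝ] Y) = fderiv ℝ Φ u)
    (C : ℝ) (hC : 0 < C)
    (hbound : ∀ u h : X, C * ‖h‖ ≤ ‖fderiv ℝ Φ u h‖) :
    ∃ Ψ : Y → X, ContDiff ℝ 1 Ψ ∧
      Function.LeftInverse Ψ Φ ∧ Function.RightInverse Ψ Φ := by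
  choose e he using hinv
  have hd : ∀ x, HasStrictFDerivAt Φ ((e x : X →L[ℝ] Y)) x := fun x => by
    rw [he x]
    exact hΦ.contDiffAt.hasStrictFDerivAt one_ne_zero
  have hb : ∀ x h, C * ‖h‖ ≤ ‖e x h‖ := fun x h => by
    have h1 := hbound x h
    rw [← he x] at h1
    simpa using h1
  have hinj : Function.Injective Φ := phi_inj hd hC hb
  have hsurj : Function.Surjective Φ := phi_surj hd hC hb
  have : Nonempty X := ⟨0⟩
  set Ψ := Function.invFun Φ with hΨ
  have hleft : Function.LeftInverse Ψ Φ := Function.leftInverse_invFun hinj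
  have hright : Function.RightInverse Ψ Φ := Function.rightInverse_invFun hsurj
  refine ⟨Ψ, ?_, hleft, hright⟩
  rw [contDiff_iff_contDiffAt]
  intro y
  set x := Ψ y with hx
  have hΦx : Φ x = y := hright y
  have hfd : HasFDerivAt Φ ((e x : X →L[ℝ] Y)) x := (hd x).hasFDerivAt
  have hloc : ContDiffAt ℝ 1 (hΦ.contDiffAt.localInverse hfd one_ne_zero) (Φ x) :=
    hΦ.contDiffAt.to_localInverse hfd one_ne_zero
  rw [hΦx] at hloc
  apply hloc.congr_of_eventuallyEq
  have hev : ∀ᶠ y' in 𝓝 y, Φ ((hΦ.contDiffAt.localInverse hfd one_ne_zero) y') = y' := by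
    have h2 := (hΦ.contDiffAt.hasStrictFDerivAt' hfd one_ne_zero).eventually_right_inverse
    rwa [hΦx] at h2
  filter_upwards [hev] with y' hy'
  have h3 : Φ (Ψ y') = Φ ((hΦ.contDiffAt.localInverse hfd one_ne_zero) y') := by
    rw [hright y', hy']
  exact hinj h3
end

section
/- Let f be an appropriate function. Then the Nemytskii operator N_f : H¹(Ω) → L²(Ω) is continuously Fréchet differentiable, with derivative DN_f(u)z = ∂₂f(·,u(·)) z(·). -/
open MeasureTheory
open scoped ENNReal Classical

open Filter
open scoped NNReal Topology

private lemma nem_comp_aesm {n : ℕ} {Ω : Set (EuclideanSpace ℝ (Fin n))}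
    {μ : Measure (EuclideanSpace ℝ (Fin n))}
    (hΩae : ∀ᵐ x ∂μ, x ∈ Ω) (hΩm : MeasurableSet Ω)
    {g : EuclideanSpace ℝ (Fin n) × ℝ → ℝ}
    (hg : ContinuousOn g (Ω ×ˢ Set.univ))
    {h : EuclideanSpace ℝ (Fin n) → ℝ} (hh : AEMeasurable h μ) :
    AEMeasurable (fun x => g (x, h x)) μ := by
  set Φ : EuclideanSpace ℝ (Fin n) → EuclideanSpace ℝ (Fin n) × ℝ := fun x => (x, h x) with hΦdef
  have hΦ : AEMeasurable Φ μ := measurable_id.aemeasurable.prodMk hh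
  have hUm : MeasurableSet (Ω ×ˢ (Set.univ : Set ℝ)) := hΩm.prod MeasurableSet.univ
  have hgm : AEMeasurable g ((μ.map Φ).restrict (Ω ×ˢ Set.univ)) := hg.aemeasurable hUm
  have hae : ∀ᵐ p ∂(μ.map Φ), p ∈ Ω ×ˢ (Set.univ : Set ℝ) :=
    (ae_map_iff hΦ hUm).mpr
      (by filter_upwards [hΩae] with x hx; exact ⟨hx, trivial⟩)
  rw [Measure.restrict_eq_self_of_ae_mem hae] at hgm
  exact hgm.comp_aemeasurable hΦ

private lemma nem_tendsto_eLpNorm_zero {α : Type*} [MeasurableSpace α] {μ : Measure α}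
    [IsFiniteMeasure μ] {r : ℝ≥0∞} (hr0 : r ≠ 0) (hrt : r ≠ ∞) {g : ℕ → α → ℝ}
    (hm : ∀ k, AEMeasurable (g k) μ) {C : ℝ} (hbd : ∀ k, ∀ᵐ x ∂μ, |g k x| ≤ C)
    (h0 : ∀ᵐ x ∂μ, Tendsto (fun k => g k x) atTop (𝓝 0)) :
    Tendsto (fun k => eLpNorm (g k) r μ) atTop (𝓝 0) := by
  have hrp : 0 < r.toReal := ENNReal.toReal_pos hr0 hrt
  have key : Tendsto (fun k => ∫⁻ x, (‖g k x‖₊ : ℝ≥0∞) ^ r.toReal ∂μ) atTop (𝓝 0) := by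
    have h := tendsto_lintegral_of_dominated_convergence' (μ := μ)
      (F := fun k x => (‖g k x‖₊ : ℝ≥0∞) ^ r.toReal) (f := fun _ => 0)
      (fun _ => ENNReal.ofReal C ^ r.toReal)
      (fun k => (ENNReal.continuous_rpow_const.measurable.comp_aemeasurable (hm k).enorm))
      (fun k => by
        filter_upwards [hbd k] with x hx
        refine ENNReal.rpow_le_rpow ?_ hrp.le
        rw [← enorm_eq_nnnorm, ← ofReal_norm]
        exact ENNReal.ofReal_le_ofReal (by simpa [Real.norm_eq_abs] using hx))
      (by
        rw [lintegral_const]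
        exact ENNReal.mul_ne_top (ENNReal.rpow_ne_top_of_nonneg hrp.le ENNReal.ofReal_ne_top)
          (measure_ne_top μ _))
      (by
        filter_upwards [h0] with x hx
        have h1' : Tendsto (fun k => (‖g k x‖₊ : ℝ≥0∞)) atTop (𝓝 ((0 : ℝ≥0) : ℝ≥0∞)) :=
          ENNReal.tendsto_coe.mpr (by simpa [Function.comp_def] using (continuous_nnnorm.tendsto (0 : ℝ)).comp hx)
        have h1 : Tendsto (fun k => (‖g k x‖₊ : ℝ≥0∞)) atTop (𝓝 0) := by simpa using h1'
        have := (ENNReal.continuous_rpow_const (y := r.toReal)).tendsto 0 |>.comp h1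
        simpa [Function.comp_def, ENNReal.zero_rpow_of_pos hrp] using this)
    simpa using h
  have h2 := (ENNReal.continuous_rpow_const (y := 1 / r.toReal)).tendsto 0 |>.comp key
  have h3 : (0 : ℝ≥0∞) ^ (1 / r.toReal) = 0 := ENNReal.zero_rpow_of_pos (by positivity)
  rw [Function.comp_def, h3] at h2
  refine h2.congr fun k => ?_
  exact (eLpNorm_eq_lintegral_rpow_enorm_toReal (f := g k) hr0 hrt).symm

private lemma nem_holder {α : Type*} [MeasurableSpace α] {μ : Measure α} {g w : α → ℝ}
    (hg : AEStronglyMeasurable g μ) (hw : AEStronglyMeasurable w μ) {r s : ℝ≥0∞}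
    (hrs : (1 : ℝ≥0∞) / 2 = 1 / r + 1 / s) :
    eLpNorm (fun x => g x * w x) 2 μ ≤ eLpNorm g r μ * eLpNorm w s μ := by
  haveI : ENNReal.HolderTriple r s 2 := ⟨by simpa [one_div] using hrs.symm⟩
  simpa [smul_eq_mul, Pi.mul_def] using
    eLpNorm_smul_le_mul_eLpNorm (p := r) (q := s) (r := 2) hw hg

set_option maxHeartbeats 2000000 in
/-- for an appropriate `f` (C¹ on `Ω × ℝ`, `f(·,0) ∈ L²`, `∂₂f`
bounded), the Nemytskii operator `N_f : H¹(Ω) → L²(Ω)` is continuously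
Fréchet differentiable with `DN_f(u) z = ∂₂f(·, u(·)) z(·)`. The Sobolev space
`H¹(Ω)` is abstracted as a Banach space `X` with a continuous embedding
`ι : X → L²(Ω)` satisfying the Sobolev bound `‖ι u‖_{L^s} ≤ Cs ‖u‖` for some
`s > 2` (the only properties of `H¹(Ω)` used). -/
theorem nemytskii_contDiff {n : ℕ}
    (Ω : Set (EuclideanSpace ℝ (Fin n)))
    (hΩo : IsOpen Ω) (hΩb : Bornology.IsBounded Ω) (hΩc : IsConnected Ω)
    (μ : Measure (EuclideanSpace ℝ (Fin n))) (hμ : μ = volume.restrict Ω)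
    (f f' : EuclideanSpace ℝ (Fin n) → ℝ → ℝ)
    (hf : ContDiffOn ℝ 1 (fun p : EuclideanSpace ℝ (Fin n) × ℝ => f p.1 p.2)
      (Ω ×ˢ Set.univ))
    (hf'deriv : ∀ x ∈ Ω, ∀ t : ℝ, HasDerivAt (f x) (f' x t) t)
    (M : ℝ) (hM : ∀ x ∈ Ω, ∀ t : ℝ, |f' x t| ≤ M)
    (hf0 : MemLp (fun x => f x 0) 2 μ)
    {X : Type*} [NormedAddCommGroup X] [NormedSpace ℝ X] [CompleteSpace X]
    (ι : X →L[ℝ] Lp ℝ 2 μ) (hι : Function.Injective ι)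
    (s : ℝ≥0∞) (hs : 2 < s) (Cs : ℝ)
    (hSob : ∀ u : X, MemLp (ι u) s μ ∧
      eLpNorm (ι u) s μ ≤ ENNReal.ofReal (Cs * ‖u‖))
    (N : X → Lp ℝ 2 μ)
    (hN : ∀ u : X,
      N u = if h : MemLp (fun x => f x (ι u x)) 2 μ then h.toLp _ else 0) :
    ContDiff ℝ 1 N ∧
    ∀ u z : X, (fderiv ℝ N u z : EuclideanSpace ℝ (Fin n) → ℝ)
      =ᵐ[μ] fun x => f' x (ι u x) * ι z x := by
  classical
  have hΩm : MeasurableSet Ω := hΩo.measurableSet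
  haveI hfin : IsFiniteMeasure μ := by
    rw [hμ]
    exact ⟨by simpa [Measure.restrict_apply_univ] using hΩb.measure_lt_top⟩
  have hΩae : ∀ᵐ x ∂μ, x ∈ Ω := by rw [hμ]; exact ae_restrict_mem hΩm
  obtain ⟨x₀, hx₀⟩ := hΩc.nonempty
  have hM0 : 0 ≤ M := le_trans (abs_nonneg _) (hM x₀ hx₀ 0)
  -- exponents
  have hs2 : s⁻¹ < 2⁻¹ := ENNReal.inv_lt_inv.mpr hs
  set r : ℝ≥0∞ := (2⁻¹ - s⁻¹)⁻¹ with hrdef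
  have hr0 : r ≠ 0 := by
    simp only [hrdef, ne_eq, ENNReal.inv_eq_zero]
    exact (lt_of_le_of_lt tsub_le_self (by norm_num : (2 : ℝ≥0∞)⁻¹ < ⊤)).ne
  have hrt : r ≠ ∞ := by
    simp only [hrdef, ne_eq, ENNReal.inv_eq_top]
    exact (tsub_pos_of_lt hs2).ne'
  have hrs : (1 : ℝ≥0∞) / 2 = 1 / r + 1 / s := by
    simp only [one_div, hrdef, inv_inv]
    exact (tsub_add_cancel_of_le hs2.le).symm
  set Cs' := max Cs 0 with hCs'def
  have hCs'0 : 0 ≤ Cs' := le_max_right _ _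
  have hSob' : ∀ u : X, eLpNorm (ι u : _ → ℝ) s μ ≤ ENNReal.ofReal (Cs' * ‖u‖) := fun u =>
    (hSob u).2.trans (ENNReal.ofReal_le_ofReal
      (mul_le_mul_of_nonneg_right (le_max_left _ _) (norm_nonneg _)))
  -- continuity of f and f' on U
  set U : Set (EuclideanSpace ℝ (Fin n) × ℝ) := Ω ×ˢ Set.univ with hUdef
  have hUo : IsOpen U := hΩo.prod isOpen_univ
  have hf'eq : ∀ p ∈ U, f' p.1 p.2
      = fderiv ℝ (fun p : EuclideanSpace ℝ (Fin n) × ℝ => f p.1 p.2) p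
          ((0 : EuclideanSpace ℝ (Fin n)), (1 : ℝ)) := by
    intro p hp
    have hdiff : DifferentiableAt ℝ (fun p : EuclideanSpace ℝ (Fin n) × ℝ => f p.1 p.2) p :=
      (hf.differentiableOn one_ne_zero).differentiableAt (hUo.mem_nhds hp)
    have hline : HasDerivAt (fun t : ℝ => ((p.1, t) : EuclideanSpace ℝ (Fin n) × ℝ))
        ((0 : EuclideanSpace ℝ (Fin n)), (1 : ℝ)) p.2 :=
      (hasDerivAt_const p.2 p.1).prodMk (hasDerivAt_id p.2)
    have hcomp := hdiff.hasFDerivAt.comp_hasDerivAt p.2 hline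
    exact (hf'deriv p.1 hp.1 p.2).unique (by simpa [Function.comp_def] using hcomp)
  have hf'cont : ContinuousOn (fun p : EuclideanSpace ℝ (Fin n) × ℝ => f' p.1 p.2) U := by
    refine ContinuousOn.congr ?_ hf'eq
    exact (ContinuousLinearMap.apply ℝ ℝ
      ((0 : EuclideanSpace ℝ (Fin n)), (1 : ℝ))).continuous.comp_continuousOn
      (hf.continuousOn_fderiv_of_isOpen hUo le_rfl)
  have hfcont : ContinuousOn (fun p : EuclideanSpace ℝ (Fin n) × ℝ => f p.1 p.2) U :=
    hf.continuousOn
  -- Lipschitz bound in second variable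
  have hLip : ∀ x ∈ Ω, ∀ a b : ℝ, |f x a - f x b| ≤ M * |a - b| := by
    intro x hx a b
    have := Convex.norm_image_sub_le_of_norm_hasDerivWithin_le
      (f := f x) (f' := f' x) (s := Set.univ)
      (fun t _ => (hf'deriv x hx t).hasDerivWithinAt)
      (fun t _ => by simpa [Real.norm_eq_abs] using hM x hx t)
      convex_univ (Set.mem_univ b) (Set.mem_univ a)
    simpa [Real.norm_eq_abs] using this
  -- measurability of compositions
  have hfmeas : ∀ {h : EuclideanSpace ℝ (Fin n) → ℝ}, AEMeasurable h μ →
      AEMeasurable (fun x => f x (h x)) μ := fun hh => nem_comp_aesm hΩae hΩm hfcont hh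
  have hf'meas : ∀ {h : EuclideanSpace ℝ (Fin n) → ℝ}, AEMeasurable h μ →
      AEMeasurable (fun x => f' x (h x)) μ := fun hh => nem_comp_aesm hΩae hΩm hf'cont hh
  -- MemLp of the composition
  have hmemf : ∀ u : X, MemLp (fun x => f x ((ι u : _ → ℝ) x)) 2 μ := by
    intro u
    have hiu : AEMeasurable (ι u : _ → ℝ) μ := (Lp.aestronglyMeasurable (ι u)).aemeasurable
    have haesm : AEStronglyMeasurable (fun x => f x ((ι u : _ → ℝ) x)) μ :=
      (hfmeas hiu).aestronglyMeasurable
    have hbound : MemLp (fun x => ‖f x 0‖ + M * ‖(ι u : _ → ℝ) x‖) 2 μ :=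
      hf0.norm.add ((Lp.memLp (ι u)).norm.const_mul M)
    refine hbound.of_le haesm ?_
    filter_upwards [hΩae] with x hx
    have h1 : |f x ((ι u : _ → ℝ) x) - f x 0| ≤ M * |(ι u : _ → ℝ) x - 0| := hLip x hx _ _
    rw [sub_zero] at h1
    have h2 : |f x ((ι u : _ → ℝ) x)| ≤ |f x 0| + M * |(ι u : _ → ℝ) x| := by
      calc |f x ((ι u : _ → ℝ) x)|
          ≤ |f x ((ι u : _ → ℝ) x) - f x 0| + |f x 0| := by
            simpa using abs_add_le (f x ((ι u : _ → ℝ) x) - f x 0) (f x 0)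
        _ ≤ M * |(ι u : _ → ℝ) x| + |f x 0| := add_le_add_left h1 _
        _ = |f x 0| + M * |(ι u : _ → ℝ) x| := by ring
    have h3 : (0 : ℝ) ≤ |f x 0| + M * |(ι u : _ → ℝ) x| := by positivity
    simpa [Real.norm_eq_abs, abs_of_nonneg h3] using h2
  have hNcoe : ∀ u : X, (N u : _ → ℝ) =ᵐ[μ] fun x => f x ((ι u : _ → ℝ) x) := by
    intro u
    rw [hN u, dif_pos (hmemf u)]
    exact (hmemf u).coeFn_toLp
  -- bounded multiplier facts
  have hbbd : ∀ u : X, ∀ᵐ x ∂μ, |f' x ((ι u : _ → ℝ) x)| ≤ M := fun u => by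
    filter_upwards [hΩae] with x hx; exact hM x hx _
  have hmul : ∀ (b : EuclideanSpace ℝ (Fin n) → ℝ), AEMeasurable b μ →
      (∀ᵐ x ∂μ, |b x| ≤ M) → ∀ w : Lp ℝ 2 μ,
      MemLp (fun x => b x * w x) 2 μ ∧
      eLpNorm (fun x => b x * w x) 2 μ ≤ ENNReal.ofReal M * eLpNorm (w : _ → ℝ) 2 μ := by
    intro b hb hbM w
    have haesm : AEStronglyMeasurable (fun x => b x * w x) μ :=
      (hb.mul (Lp.aestronglyMeasurable w).aemeasurable).aestronglyMeasurable
    have hle : ∀ᵐ x ∂μ, ‖b x * (w : _ → ℝ) x‖ ≤ M * ‖(w : _ → ℝ) x‖ := by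
      filter_upwards [hbM] with x hx
      rw [Real.norm_eq_abs, Real.norm_eq_abs, abs_mul]
      exact mul_le_mul_of_nonneg_right hx (abs_nonneg _)
    constructor
    · exact (Lp.memLp w).of_le_mul haesm hle
    · have hmono : eLpNorm (fun x => b x * w x) 2 μ
          ≤ eLpNorm (fun x => M • (w : _ → ℝ) x) 2 μ := by
        refine eLpNorm_mono_ae ?_
        filter_upwards [hle] with x hx
        rw [Real.norm_eq_abs (M • _), smul_eq_mul, abs_mul, abs_of_nonneg hM0]
        simpa using hx
      refine hmono.trans (le_of_eq ?_)
      rw [show (fun x => M • (w : _ → ℝ) x) = M • ((w : _ → ℝ)) from rfl, eLpNorm_const_smul]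
      simp [ENNReal.smul_def, ← enorm_eq_nnnorm, ← ofReal_norm, Real.norm_eq_abs, abs_of_nonneg hM0]
  -- existence of the candidate derivative
  have hDex : ∀ u : X, ∃ Du : X →L[ℝ] Lp ℝ 2 μ,
      ∀ z : X, (Du z : _ → ℝ) =ᵐ[μ] fun x => f' x ((ι u : _ → ℝ) x) * (ι z : _ → ℝ) x := by
    intro u
    set b : EuclideanSpace ℝ (Fin n) → ℝ := fun x => f' x ((ι u : _ → ℝ) x) with hbdef
    have hb : AEMeasurable b μ := hf'meas (Lp.aestronglyMeasurable (ι u)).aemeasurable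
    have hbM := hbbd u
    have hmm := fun w => (hmul b hb hbM w).1
    refine ⟨LinearMap.mkContinuous
      { toFun := fun z => (hmm (ι z)).toLp _
        map_add' := ?_
        map_smul' := ?_ } (M * ‖ι‖) ?_, fun z => (hmm (ι z)).coeFn_toLp⟩
    · intro z z'
      refine Lp.ext ?_
      have e1 := (hmm (ι (z + z'))).coeFn_toLp
      have e2 := (hmm (ι z)).coeFn_toLp
      have e3 := (hmm (ι z')).coeFn_toLp
      have e4 : (ι (z + z') : _ → ℝ) =ᵐ[μ] fun x => (ι z : _ → ℝ) x + (ι z' : _ → ℝ) x := by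
        rw [map_add]; exact Lp.coeFn_add _ _
      have e5 := Lp.coeFn_add ((hmm (ι z)).toLp _) ((hmm (ι z')).toLp _)
      filter_upwards [e1, e2, e3, e4, e5] with x a1 a2 a3 a4 a5
      simp only [Pi.add_apply] at *
      rw [a5, a1, a2, a3, a4]
      ring
    · intro c z
      refine Lp.ext ?_
      have e1 := (hmm (ι (c • z))).coeFn_toLp
      have e2 := (hmm (ι z)).coeFn_toLp
      have e4 : (ι (c • z) : _ → ℝ) =ᵐ[μ] fun x => c * (ι z : _ → ℝ) x := by
        rw [ι.map_smul]; exact Lp.coeFn_smul _ _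
      have e5 := Lp.coeFn_smul c ((hmm (ι z)).toLp _)
      filter_upwards [e1, e2, e4, e5] with x a1 a2 a4 a5
      simp only [Pi.smul_apply, smul_eq_mul, RingHom.id_apply] at *
      rw [a5, a1, a2, a4]
      ring
    · intro z
      simp only [LinearMap.coe_mk, AddHom.coe_mk]
      rw [Lp.norm_toLp]
      have h1 := (hmul b hb hbM (ι z)).2
      have h2 : (eLpNorm (fun x => b x * (ι z : _ → ℝ) x) 2 μ).toReal
          ≤ (ENNReal.ofReal M * eLpNorm ((ι z : _ → ℝ)) 2 μ).toReal :=
        ENNReal.toReal_mono (ENNReal.mul_ne_top ENNReal.ofReal_ne_top (Lp.eLpNorm_ne_top _)) h1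
      refine h2.trans ?_
      rw [ENNReal.toReal_mul, ENNReal.toReal_ofReal hM0, ← Lp.norm_def]
      rw [mul_assoc]
      exact mul_le_mul_of_nonneg_left (ι.le_opNorm z) hM0
  choose D hD using hDex
  -- representation of the remainder
  have hrem : ∀ u z : X, ((N (u + z) - N u - D u z : Lp ℝ 2 μ) : _ → ℝ) =ᵐ[μ]
      fun x => f x ((ι u : _ → ℝ) x + (ι z : _ → ℝ) x) - f x ((ι u : _ → ℝ) x)
        - f' x ((ι u : _ → ℝ) x) * (ι z : _ → ℝ) x := by
    intro u z
    have h1 := Lp.coeFn_sub (N (u + z) - N u) (D u z)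
    have h2 := Lp.coeFn_sub (N (u + z)) (N u)
    have h3 := hNcoe (u + z)
    have h4 := hNcoe u
    have h5 := hD u z
    have h6 : (ι (u + z) : _ → ℝ) =ᵐ[μ] fun x => (ι u : _ → ℝ) x + (ι z : _ → ℝ) x := by
      rw [map_add]; exact Lp.coeFn_add _ _
    filter_upwards [h1, h2, h3, h4, h5, h6] with x e1 e2 e3 e4 e5 e6
    simp only [Pi.sub_apply, Pi.add_apply] at *
    rw [e1, e2, e3, e4, e5, e6]
  -- finiteness of eLpNorm of a.e.-bounded functions in exponent r
  have hQfin : ∀ (g : EuclideanSpace ℝ (Fin n) → ℝ) (C : ℝ), (∀ᵐ x ∂μ, |g x| ≤ C) →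
      eLpNorm g r μ ≠ ∞ := by
    intro g C hg
    refine ((eLpNorm_le_of_ae_bound (C := C)
      (by filter_upwards [hg] with x hx; simpa [Real.norm_eq_abs] using hx)).trans_lt ?_).ne
    exact ENNReal.mul_lt_top
      (ENNReal.rpow_lt_top_of_nonneg (by positivity) (measure_ne_top μ _))
      ENNReal.ofReal_lt_top
  -- core remainder estimate along sequences converging a.e.
  have core : ∀ (u : X) (z : ℕ → X),
      (∀ᵐ x ∂μ, Tendsto (fun k => (ι (z k) : _ → ℝ) x) atTop (𝓝 0)) →
      Tendsto (fun k => ‖z k‖⁻¹ * ‖N (u + z k) - N u - D u (z k)‖) atTop (𝓝 0) := by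
    intro u z hz
    set q : ℕ → EuclideanSpace ℝ (Fin n) → ℝ := fun k x =>
      (f x ((ι u : _ → ℝ) x + (ι (z k) : _ → ℝ) x) - f x ((ι u : _ → ℝ) x)
        - f' x ((ι u : _ → ℝ) x) * (ι (z k) : _ → ℝ) x) * ((ι (z k) : _ → ℝ) x)⁻¹ with hqdef
    have hvm : AEMeasurable (ι u : _ → ℝ) μ := (Lp.aestronglyMeasurable (ι u)).aemeasurable
    have hqm : ∀ k, AEMeasurable (q k) μ := by
      intro k
      have hwm : AEMeasurable (ι (z k) : _ → ℝ) μ := (Lp.aestronglyMeasurable _).aemeasurable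
      exact (((hfmeas (hvm.add hwm)).sub (hfmeas hvm)).sub ((hf'meas hvm).mul hwm)).mul hwm.inv
    have hqbd : ∀ k, ∀ᵐ x ∂μ, |q k x| ≤ 2 * M := by
      intro k
      filter_upwards [hΩae] with x hx
      set v := (ι u : _ → ℝ) x
      set w := (ι (z k) : _ → ℝ) x
      have h1 : |f x (v + w) - f x v| ≤ M * |w| := by simpa using hLip x hx (v + w) v
      have h2 : |f' x v * w| ≤ M * |w| := by
        rw [abs_mul]; exact mul_le_mul_of_nonneg_right (hM x hx v) (abs_nonneg _)
      have hnum : |f x (v + w) - f x v - f' x v * w| ≤ 2 * M * |w| := by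
        calc |f x (v + w) - f x v - f' x v * w|
            ≤ |f x (v + w) - f x v| + |f' x v * w| := abs_sub _ _
          _ ≤ M * |w| + M * |w| := add_le_add h1 h2
          _ = 2 * M * |w| := by ring
      show |(f x (v + w) - f x v - f' x v * w) * w⁻¹| ≤ 2 * M
      rcases eq_or_ne w 0 with h | h
      · simp [h]; positivity
      · rw [abs_mul, abs_inv]
        calc |f x (v + w) - f x v - f' x v * w| * |w|⁻¹ ≤ (2 * M * |w|) * |w|⁻¹ := by
              exact mul_le_mul_of_nonneg_right hnum (by positivity)
          _ = 2 * M := by field_simp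
    have hq0 : ∀ᵐ x ∂μ, Tendsto (fun k => q k x) atTop (𝓝 0) := by
      filter_upwards [hΩae, hz] with x hx hwk
      set v := (ι u : _ → ℝ) x
      have hd := hf'deriv x hx v
      rw [hasDerivAt_iff_isLittleO] at hd
      have htend : Tendsto (fun k => v + (ι (z k) : _ → ℝ) x) atTop (𝓝 v) := by
        simpa using tendsto_const_nhds.add hwk
      have hcomp := hd.comp_tendsto htend
      have hcomp' : (fun k => f x (v + (ι (z k) : _ → ℝ) x) - f x v
          - f' x v * (ι (z k) : _ → ℝ) x) =o[atTop] fun k => (ι (z k) : _ → ℝ) x := by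
        simpa [Function.comp_def, smul_eq_mul, mul_comm] using hcomp
      simpa [div_eq_mul_inv] using hcomp'.tendsto_div_nhds_zero
    have hQ0 : Tendsto (fun k => (eLpNorm (q k) r μ).toReal) atTop (𝓝 0) := by
      have h := nem_tendsto_eLpNorm_zero hr0 hrt hqm (C := 2 * M) hqbd hq0
      have := (ENNReal.tendsto_toReal (a := 0) (by simp)).comp h
      simpa [Function.comp_def] using this
    have hbound : ∀ k, ‖z k‖⁻¹ * ‖N (u + z k) - N u - D u (z k)‖
        ≤ (eLpNorm (q k) r μ).toReal * Cs' := by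
      intro k
      have hrep : ((N (u + z k) - N u - D u (z k) : Lp ℝ 2 μ) : _ → ℝ) =ᵐ[μ]
          fun x => q k x * (ι (z k) : _ → ℝ) x := by
        filter_upwards [hrem u (z k)] with x hx
        rw [hx]
        rcases eq_or_ne ((ι (z k) : _ → ℝ) x) 0 with h | h
        · simp [hqdef, h]
        · simp only [hqdef]
          field_simp
      have hnorm : ‖N (u + z k) - N u - D u (z k)‖
          = (eLpNorm (fun x => q k x * (ι (z k) : _ → ℝ) x) 2 μ).toReal := by
        rw [Lp.norm_def, eLpNorm_congr_ae hrep]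
      have hH : eLpNorm (fun x => q k x * (ι (z k) : _ → ℝ) x) 2 μ
          ≤ eLpNorm (q k) r μ * ENNReal.ofReal (Cs' * ‖z k‖) :=
        (nem_holder (hqm k).aestronglyMeasurable (Lp.aestronglyMeasurable _) hrs).trans
          (mul_le_mul_right (hSob' (z k)) _)
      have hstep : ‖N (u + z k) - N u - D u (z k)‖
          ≤ (eLpNorm (q k) r μ).toReal * (Cs' * ‖z k‖) := by
        rw [hnorm]
        calc (eLpNorm (fun x => q k x * (ι (z k) : _ → ℝ) x) 2 μ).toReal
            ≤ ((eLpNorm (q k) r μ) * ENNReal.ofReal (Cs' * ‖z k‖)).toReal :=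
              ENNReal.toReal_mono
                (ENNReal.mul_ne_top (hQfin _ _ (hqbd k)) ENNReal.ofReal_ne_top) hH
          _ = (eLpNorm (q k) r μ).toReal * (Cs' * ‖z k‖) := by
              rw [ENNReal.toReal_mul, ENNReal.toReal_ofReal (by positivity)]
      calc ‖z k‖⁻¹ * ‖N (u + z k) - N u - D u (z k)‖
          ≤ ‖z k‖⁻¹ * ((eLpNorm (q k) r μ).toReal * (Cs' * ‖z k‖)) := by
            exact mul_le_mul_of_nonneg_left hstep (by positivity)
        _ = (eLpNorm (q k) r μ).toReal * Cs' * (‖z k‖⁻¹ * ‖z k‖) := by ring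
        _ ≤ (eLpNorm (q k) r μ).toReal * Cs' * 1 := by
            refine mul_le_mul_of_nonneg_left ?_ (by positivity)
            rcases eq_or_ne (‖z k‖) 0 with h | h
            · simp [h]
            · rw [inv_mul_cancel₀ h]
        _ = (eLpNorm (q k) r μ).toReal * Cs' := mul_one _
    have hlim : Tendsto (fun k => (eLpNorm (q k) r μ).toReal * Cs') atTop (𝓝 0) := by
      simpa using hQ0.mul_const Cs'
    exact squeeze_zero (fun k => by positivity) hbound hlim
  -- differentiability
  haveI : Fact ((1 : ℝ≥0∞) ≤ 2) := ⟨by norm_num⟩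
  have hDiff : ∀ u : X, HasFDerivAt N (D u) u := by
    intro u
    rw [hasFDerivAt_iff_tendsto]
    refine tendsto_of_subseq_tendsto ?_
    intro ns hns
    have hLptend : Tendsto (fun k => ι (ns k - u)) atTop (𝓝 (0 : Lp ℝ 2 μ)) := by
      have h1 : Tendsto (fun k => ι (ns k) - ι u) atTop (𝓝 (ι u - ι u)) :=
        ((ι.continuous.tendsto u).comp hns).sub tendsto_const_nhds
      rw [sub_self] at h1
      exact h1.congr fun k => (ι.map_sub (ns k) u).symm
    have hmeas : TendstoInMeasure μ (fun k => ((ι (ns k - u) : Lp ℝ 2 μ) : _ → ℝ)) atTop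
        ((0 : Lp ℝ 2 μ) : _ → ℝ) := tendstoInMeasure_of_tendsto_Lp hLptend
    obtain ⟨ms, hmsmono, hmsae⟩ := hmeas.exists_seq_tendsto_ae
    refine ⟨ms, ?_⟩
    have hae0 : ∀ᵐ x ∂μ, Tendsto (fun j => (ι (ns (ms j) - u) : _ → ℝ) x) atTop (𝓝 0) := by
      filter_upwards [hmsae, Lp.coeFn_zero ℝ 2 μ] with x hx h0
      rwa [h0] at hx
    have hcore := core u (fun j => ns (ms j) - u) hae0
    refine hcore.congr fun j => ?_
    rw [add_sub_cancel]
  -- continuity of the derivative map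
  have coreD : ∀ (u : X) (vs : ℕ → X),
      (∀ᵐ x ∂μ, Tendsto (fun k => (ι (vs k) : _ → ℝ) x) atTop (𝓝 ((ι u : _ → ℝ) x))) →
      Tendsto (fun k => ‖D (vs k) - D u‖) atTop (𝓝 0) := by
    intro u vs hvs
    set g : ℕ → EuclideanSpace ℝ (Fin n) → ℝ := fun k x =>
      f' x ((ι (vs k) : _ → ℝ) x) - f' x ((ι u : _ → ℝ) x) with hgdef
    have hgm : ∀ k, AEMeasurable (g k) μ := fun k =>
      (hf'meas (Lp.aestronglyMeasurable _).aemeasurable).sub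
        (hf'meas (Lp.aestronglyMeasurable _).aemeasurable)
    have hgbd : ∀ k, ∀ᵐ x ∂μ, |g k x| ≤ 2 * M := by
      intro k
      filter_upwards [hΩae] with x hx
      calc |g k x| ≤ |f' x ((ι (vs k) : _ → ℝ) x)| + |f' x ((ι u : _ → ℝ) x)| := abs_sub _ _
        _ ≤ M + M := add_le_add (hM x hx _) (hM x hx _)
        _ = 2 * M := by ring
    have hg0 : ∀ᵐ x ∂μ, Tendsto (fun k => g k x) atTop (𝓝 0) := by
      filter_upwards [hΩae, hvs] with x hx hvx
      have hc : ContinuousAt (fun p : EuclideanSpace ℝ (Fin n) × ℝ => f' p.1 p.2)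
          (x, (ι u : _ → ℝ) x) :=
        hf'cont.continuousAt (hUo.mem_nhds ⟨hx, trivial⟩)
      have h1 : Tendsto (fun k => ((x, (ι (vs k) : _ → ℝ) x) : EuclideanSpace ℝ (Fin n) × ℝ))
          atTop (𝓝 (x, (ι u : _ → ℝ) x)) := tendsto_const_nhds.prodMk_nhds hvx
      have h2 := hc.tendsto.comp h1
      have h3 : Tendsto (fun k => f' x ((ι (vs k) : _ → ℝ) x)) atTop
          (𝓝 (f' x ((ι u : _ → ℝ) x))) := h2
      simpa [hgdef] using h3.sub (tendsto_const_nhds (x := f' x ((ι u : _ → ℝ) x)))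
    have hQ0 : Tendsto (fun k => (eLpNorm (g k) r μ).toReal) atTop (𝓝 0) := by
      have h := nem_tendsto_eLpNorm_zero hr0 hrt hgm (C := 2 * M) hgbd hg0
      have := (ENNReal.tendsto_toReal (a := 0) (by simp)).comp h
      simpa [Function.comp_def] using this
    have hbound : ∀ k, ‖D (vs k) - D u‖ ≤ (eLpNorm (g k) r μ).toReal * Cs' := by
      intro k
      refine ContinuousLinearMap.opNorm_le_bound _ (by positivity) fun z => ?_
      have hrep : (((D (vs k) - D u) z : Lp ℝ 2 μ) : _ → ℝ) =ᵐ[μ]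
          fun x => g k x * (ι z : _ → ℝ) x := by
        have e1 := Lp.coeFn_sub (D (vs k) z) (D u z)
        have e2 := hD (vs k) z
        have e3 := hD u z
        filter_upwards [e1, e2, e3] with x a1 a2 a3
        simp only [ContinuousLinearMap.coe_sub', Pi.sub_apply] at *
        rw [a1, a2, a3]
        show _ = (f' x ((ι (vs k) : _ → ℝ) x) - f' x ((ι u : _ → ℝ) x)) * (ι z : _ → ℝ) x
        ring
      have hnorm : ‖(D (vs k) - D u) z‖
          = (eLpNorm (fun x => g k x * (ι z : _ → ℝ) x) 2 μ).toReal := by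
        rw [Lp.norm_def, eLpNorm_congr_ae hrep]
      have hH : eLpNorm (fun x => g k x * (ι z : _ → ℝ) x) 2 μ
          ≤ eLpNorm (g k) r μ * ENNReal.ofReal (Cs' * ‖z‖) :=
        (nem_holder (hgm k).aestronglyMeasurable (Lp.aestronglyMeasurable _) hrs).trans
          (mul_le_mul_right (hSob' z) _)
      rw [hnorm]
      calc (eLpNorm (fun x => g k x * (ι z : _ → ℝ) x) 2 μ).toReal
          ≤ ((eLpNorm (g k) r μ) * ENNReal.ofReal (Cs' * ‖z‖)).toReal :=
            ENNReal.toReal_mono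
              (ENNReal.mul_ne_top (hQfin _ _ (hgbd k)) ENNReal.ofReal_ne_top) hH
        _ = (eLpNorm (g k) r μ).toReal * (Cs' * ‖z‖) := by
            rw [ENNReal.toReal_mul, ENNReal.toReal_ofReal (by positivity)]
        _ = (eLpNorm (g k) r μ).toReal * Cs' * ‖z‖ := by ring
    have hlim : Tendsto (fun k => (eLpNorm (g k) r μ).toReal * Cs') atTop (𝓝 0) := by
      simpa using hQ0.mul_const Cs'
    exact squeeze_zero (fun k => norm_nonneg _) hbound hlim
  have hDcont : Continuous D := by
    rw [continuous_iff_continuousAt]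
    intro u
    rw [ContinuousAt, tendsto_iff_norm_sub_tendsto_zero]
    refine tendsto_of_subseq_tendsto ?_
    intro ns hns
    have hLptend : Tendsto (fun k => ι (ns k)) atTop (𝓝 (ι u)) := (ι.continuous.tendsto u).comp hns
    have hmeas : TendstoInMeasure μ (fun k => ((ι (ns k) : Lp ℝ 2 μ) : _ → ℝ)) atTop
        ((ι u : Lp ℝ 2 μ) : _ → ℝ) := tendstoInMeasure_of_tendsto_Lp hLptend
    obtain ⟨ms, hmsmono, hmsae⟩ := hmeas.exists_seq_tendsto_ae
    exact ⟨ms, coreD u (fun j => ns (ms j)) hmsae⟩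
  -- assembly
  have hfd : ∀ u, fderiv ℝ N u = D u := fun u => (hDiff u).fderiv
  have hfdD : fderiv ℝ N = D := funext hfd
  refine ⟨contDiff_one_iff_fderiv.mpr ⟨fun u => (hDiff u).differentiableAt, ?_⟩, ?_⟩
  · rw [hfdD]; exact hDcont
  · intro u z
    rw [hfd u]
    exact hD u z
end

section
/- Let f be appropriate and I = [a,b] ⊇ closure(∂₂f(Ω × ℝ)), and let X = W_X ⊕ V_X, Y = W_Y ⊕ V_Y be the I-decompositions with V_X = V_Y = span{φ_k : λ_k ∈ [a,b]}. Then there exists C > 0, independent of v, w, such that for all v ∈ V_X, w ∈ W_X, h ∈ W_X: ‖DF_v(w)h‖_{H⁻¹} ≥ C‖h‖_{H¹}, where DF_v(w)h = P_Y(−Δh − ∂₂f(·,w+v)h). -/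
set_option synthInstance.maxHeartbeats 400000
set_option maxHeartbeats 1000000

open MeasureTheory
open scoped ENNReal Classical RealInnerProductSpace

lemma memℓp_indicator (c : lp (fun _ : ℕ => ℝ) 2) (P : ℕ → Prop) :
    Memℓp (fun j => if P j then c j else 0) 2 := by
  have h2 : (0:ℝ) < (2:ℝ≥0∞).toReal := by norm_num
  rw [memℓp_gen_iff h2]
  refine Summable.of_nonneg_of_le (fun j => ?_) (fun j => ?_)
    ((memℓp_gen_iff h2).mp (lp.memℓp c))
  · positivity
  · gcongr
    split_ifs
    · rfl
    · simp [norm_nonneg]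

lemma mem_orthogonal_span' {E : Type*} [NormedAddCommGroup E] [InnerProductSpace ℝ E]
    (s : Set E) (x : E) (h : ∀ u ∈ s, ⟪u, x⟫ = 0) : x ∈ (Submodule.span ℝ s)ᗮ := by
  rw [Submodule.mem_orthogonal]
  intro u hu
  induction hu using Submodule.span_induction with
  | mem u hu => exact h u hu
  | zero => simp
  | add u v _ _ hu hv => simp [inner_add_left, hu, hv]
  | smul t u _ hu => simp [inner_smul_left, hu]

lemma spectral_inner {X : Type*} [NormedAddCommGroup X] [InnerProductSpace ℝ X]
    [CompleteSpace X]
    (bB : HilbertBasis ℕ ℝ X) (T : X →L[ℝ] X)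
    (hsym : ∀ z z' : X, ⟪T z, z'⟫ = ⟪z, T z'⟫)
    (lam : ℕ → ℝ)
    (heig : ∀ k, T (bB k) = (lam k)⁻¹ • bB k) (u : X) :
    ⟪T u, u⟫ = ∑' j, (lam j)⁻¹ * (bB.repr u j * bB.repr u j) := by
  calc ⟪T u, u⟫ = ⟪bB.repr (T u), bB.repr u⟫ := (bB.repr.inner_map_map _ _).symm
    _ = ∑' j, (bB.repr (T u) j) * (bB.repr u j) := by
        rw [lp.inner_eq_tsum]
        simp [RCLike.inner_apply, mul_comm]
    _ = ∑' j, (lam j)⁻¹ * (bB.repr u j * bB.repr u j) := by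
        congr 1
        ext j
        have : bB.repr (T u) j = (lam j)⁻¹ * bB.repr u j := by
          rw [bB.repr_apply_apply, ← hsym, heig, real_inner_smul_left, bB.repr_apply_apply]
        rw [this]; ring

lemma summable_mul_self (g : lp (fun _ : ℕ => ℝ) 2) :
    Summable (fun j => g j * g j) := by
  have h2 : (0:ℝ) < (2:ℝ≥0∞).toReal := by norm_num
  have hs := (memℓp_gen_iff h2).mp (lp.memℓp g)
  refine hs.congr (fun j => ?_)
  rw [show ((2:ℝ≥0∞)).toReal = ((2:ℕ):ℝ) by norm_num, Real.rpow_natCast, pow_two,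
    Real.norm_eq_abs, abs_mul_abs_self]

lemma inner_lp_eq_tsum (X : Type*) [NormedAddCommGroup X] [InnerProductSpace ℝ X]
    [CompleteSpace X] (bB : HilbertBasis ℕ ℝ X) (x y : X) :
    ⟪x, y⟫ = ∑' j, bB.repr x j * bB.repr y j := by
  calc ⟪x, y⟫ = ⟪bB.repr x, bB.repr y⟫ := (bB.repr.inner_map_map _ _).symm
    _ = ∑' j, bB.repr x j * bB.repr y j := by
        rw [lp.inner_eq_tsum]; simp [RCLike.inner_apply, mul_comm]

/-- uniform coercive bound for the projected restrictions: in
the `I`-decomposition `X = W_X ⊕ V_X`, `Y = W_Y ⊕ V_Y` with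
`V_X = V_Y = span{φ_k : λ_k ∈ [a,b]}` and `[a,b] ⊇ closure(∂₂f(Ω×ℝ))`, there
is `C > 0` independent of `v, w` with `‖DF_v(w) h‖_{H⁻¹} ≥ C ‖h‖_{H¹}` for all
`v ∈ V_X`, `w, h ∈ W_X`. Here `X` is `H¹₀(Ω)` (abstracted as a Hilbert space
with compact-type Sobolev embedding `ι` into `L²(Ω)`), `H⁻¹(Ω)` is identified
with `H¹₀(Ω)` via `⟨−Δu, ·⟩ = ⟨u, ·⟩₁`; under this identification
`S : L² → H⁻¹ ≅ X` is the adjoint of `ι`, the Dirichlet eigenfunctions satisfy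
`λ_k S(ι φ_k) = φ_k`, and
`DF_v(w) h = P_Y(−Δh − ∂₂f(·, w+v) h) = P_W(h − S(∂₂f(·, w+v)·h))`. -/
theorem coercive_bound {n : ℕ}
    (Ω : Set (EuclideanSpace ℝ (Fin n)))
    (hΩo : IsOpen Ω) (hΩb : Bornology.IsBounded Ω) (hΩc : IsConnected Ω)
    (μ : Measure (EuclideanSpace ℝ (Fin n))) (hμ : μ = volume.restrict Ω)
    (f f' : EuclideanSpace ℝ (Fin n) → ℝ → ℝ)
    (hf : ContDiffOn ℝ 1 (fun p : EuclideanSpace ℝ (Fin n) × ℝ => f p.1 p.2)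
      (Ω ×ˢ Set.univ))
    (hf'deriv : ∀ x ∈ Ω, ∀ t : ℝ, HasDerivAt (f x) (f' x t) t)
    (hf0 : MemLp (fun x => f x 0) 2 μ)
    {X : Type*} [NormedAddCommGroup X] [InnerProductSpace ℝ X] [CompleteSpace X]
    (ι : X →L[ℝ] Lp ℝ 2 μ) (hι : Function.Injective ι)
    (s : ℝ≥0∞) (hs : 2 < s) (Cs : ℝ)
    (hSob : ∀ u : X, MemLp (ι u) s μ ∧
      eLpNorm (ι u) s μ ≤ ENNReal.ofReal (Cs * ‖u‖))
    (S : Lp ℝ 2 μ →L[ℝ] X)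
    (hS : ∀ (g : Lp ℝ 2 μ) (z : X), ⟪S g, z⟫ = inner ℝ g (ι z))
    (φ : ℕ → X) (hortho : Orthonormal ℝ φ)
    (hcomplete : (Submodule.span ℝ (Set.range φ)).topologicalClosure = ⊤)
    (lam : ℕ → ℝ) (hpos : ∀ k, 0 < lam k) (hmono : Monotone lam)
    (htop : Filter.Tendsto lam Filter.atTop Filter.atTop)
    (heigen : ∀ k, lam k • S (ι (φ k)) = φ k)
    (a b : ℝ) (hab : a ≤ b)
    (hrange : ∀ x ∈ Ω, ∀ t : ℝ, f' x t ∈ Set.Icc a b)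
    (V W : Submodule ℝ X)
    (hV : V = Submodule.span ℝ (φ '' {k | lam k ∈ Set.Icc a b}))
    (hW : W = Vᗮ) [W.HasOrthogonalProjection]
    (mul : X → X → Lp ℝ 2 μ)
    (hmul : ∀ u h : X, mul u h =
      if hm : MemLp (fun x => f' x (ι u x) * ι h x) 2 μ then hm.toLp _ else 0) :
    ∃ C : ℝ, 0 < C ∧ ∀ v ∈ V, ∀ w ∈ W, ∀ h ∈ W,
      C * ‖h‖ ≤ ‖(W.orthogonalProjectionOnto (h - S (mul (w + v) h)) : X)‖ := by
  classical
  have hsp : ⊤ ≤ (Submodule.span ℝ (Set.range φ)).topologicalClosure := hcomplete.ge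
  obtain ⟨bB, hbBc⟩ : ∃ bB : HilbertBasis ℕ ℝ X, ⇑bB = φ :=
    ⟨HilbertBasis.mk hortho hsp, HilbertBasis.coe_mk _ _⟩
  have hbB : ∀ k, bB k = φ k := fun k => congrFun hbBc k
  set T : X →L[ℝ] X := S.comp ι with hTdef
  have hT : ∀ z z' : X, ⟪T z, z'⟫ = (inner ℝ (ι z) (ι z') : ℝ) := fun z z' => hS (ι z) z'
  have hTsym : ∀ z z' : X, ⟪T z, z'⟫ = ⟪z, T z'⟫ := by
    intro z z'
    calc ⟪T z, z'⟫ = ⟪(ι z : Lp ℝ 2 μ), ι z'⟫ := hT z z'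
      _ = ⟪(ι z' : Lp ℝ 2 μ), ι z⟫ := real_inner_comm _ _
      _ = ⟪T z', z⟫ := (hT z' z).symm
      _ = ⟪z, T z'⟫ := real_inner_comm _ _
  have hTeig : ∀ k, T (bB k) = (lam k)⁻¹ • bB k := by
    intro k
    have h2 : S (ι (φ k)) = (lam k)⁻¹ • φ k := by
      calc S (ι (φ k)) = (lam k)⁻¹ • (lam k • S (ι (φ k))) := by
            rw [smul_smul, inv_mul_cancel₀ (hpos k).ne', one_smul]
        _ = (lam k)⁻¹ • φ k := by rw [heigen k]
    rw [hbB k]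
    exact h2
  -- thresholds
  have hexb : ∃ k, b < lam k := (htop.eventually_gt_atTop b).exists
  set k0 := Nat.find hexb with hk0
  have hlamp : b < lam k0 := Nat.find_spec hexb
  have hlampos : 0 < lam k0 := hpos k0
  have hk0le : ∀ j, b < lam j → lam k0 ≤ lam j := fun j hj => hmono (Nat.find_min' hexb hj)
  have hexa : ∃ k, a ≤ lam k := ⟨k0, le_trans hab hlamp.le⟩
  set N := Nat.find hexa with hNdef
  have hNlt : ∀ j, j < N → lam j < a := fun j hj => lt_of_not_ge (Nat.find_min hexa hj)
  have hltN : ∀ j, lam j < a → j < N := by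
    intro j hj
    by_contra hc
    push_neg at hc
    exact absurd (le_trans (Nat.find_spec hexa) (hmono hc)) (not_le.mpr hj)
  set δp : ℝ := 1 - max b 0 / lam k0 with hδpdef
  have hδppos : 0 < δp := by
    have : max b 0 / lam k0 < 1 := (div_lt_one hlampos).mpr (max_lt hlamp hlampos)
    simp only [hδpdef]; linarith
  set δm : ℝ := if N = 0 then 1 else a / lam (N - 1) - 1 with hδmdef
  have hδmpos : 0 < δm := by
    rw [hδmdef]
    split_ifs with h0
    · norm_num
    · have h1 : lam (N - 1) < a := hNlt _ (Nat.sub_lt (Nat.pos_of_ne_zero h0) one_pos)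
      have h2 : 0 < lam (N-1) := hpos _
      have : 1 < a / lam (N-1) := (one_lt_div h2).mpr h1
      linarith
  set C : ℝ := min (min δp δm) 1 with hCdef
  have hCpos : 0 < C := lt_min (lt_min hδppos hδmpos) one_pos
  have hC1 : C ≤ 1 := min_le_right _ _
  have hCδp : C ≤ δp := le_trans (min_le_left _ _) (min_le_left _ _)
  have hCδm : C ≤ δm := le_trans (min_le_left _ _) (min_le_right _ _)
  refine ⟨C, hCpos, ?_⟩
  intro v hv w hw h hh
  by_cases hm : MemLp (fun x => f' x (ι (w + v) x) * ι h x) 2 μ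
  swap
  · have hmeq : mul (w + v) h = 0 := by rw [hmul]; exact dif_neg hm
    rw [hmeq, map_zero, sub_zero, Submodule.coe_orthogonalProjectionOnto_apply,
      Submodule.starProjection_eq_self_iff.mpr hh]
    calc C * ‖h‖ ≤ 1 * ‖h‖ := mul_le_mul_of_nonneg_right hC1 (norm_nonneg h)
      _ = ‖h‖ := one_mul _
  -- main case
  have hmeq : mul (w + v) h = hm.toLp _ := by rw [hmul]; exact dif_pos hm
  set mF : Lp ℝ 2 μ := hm.toLp _ with hmFdef
  rw [hmeq]
  set fp : lp (fun _ : ℕ => ℝ) 2 :=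
    ⟨fun j => if b < lam j then bB.repr h j else 0,
      memℓp_indicator (bB.repr h) (fun j => b < lam j)⟩ with hfpdef
  set fm : lp (fun _ : ℕ => ℝ) 2 :=
    ⟨fun j => if lam j < a then bB.repr h j else 0,
      memℓp_indicator (bB.repr h) (fun j => lam j < a)⟩ with hfmdef
  have hfpj : ∀ j, fp j = if b < lam j then bB.repr h j else 0 := fun j => rfl
  have hfmj : ∀ j, fm j = if lam j < a then bB.repr h j else 0 := fun j => rfl
  set up := bB.repr.symm fp with hupdef
  set um := bB.repr.symm fm with humdef
  have hrup : bB.repr up = fp := bB.repr.apply_symm_apply fp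
  have hrum : bB.repr um = fm := bB.repr.apply_symm_apply fm
  -- coefficients of h vanish on [a,b]
  have hcK : ∀ j, a ≤ lam j → lam j ≤ b → bB.repr h j = 0 := by
    intro j h1 h2
    rw [bB.repr_apply_apply, hbB]
    have hhV : h ∈ Vᗮ := hW ▸ hh
    exact (Submodule.mem_orthogonal V h).mp hhV _
      (hV ▸ Submodule.subset_span ⟨j, ⟨h1, h2⟩, rfl⟩)
  have hsplit : ∀ j, bB.repr h j = fp j + fm j := by
    intro j
    by_cases h1 : b < lam j
    · have h2 : ¬ lam j < a := not_lt.mpr (hab.trans h1.le)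
      rw [hfpj, hfmj, if_pos h1, if_neg h2, add_zero]
    · by_cases h2 : lam j < a
      · rw [hfpj, hfmj, if_neg h1, if_pos h2, zero_add]
      · rw [hfpj, hfmj, if_neg h1, if_neg h2, add_zero,
          hcK j (not_lt.mp h2) (not_lt.mp h1)]
  have hhd : h = up + um := by
    apply bB.repr.injective
    rw [map_add, hrup, hrum]
    ext j
    exact hsplit j
  -- orthogonality
  have hpm0 : ⟪up, um⟫ = 0 := by
    rw [inner_lp_eq_tsum X bB, hrup, hrum]
    have : ∀ j, fp j * fm j = 0 := by
      intro j
      by_cases h1 : b < lam j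
      · have h2 : ¬ lam j < a := not_lt.mpr (hab.trans h1.le)
        rw [hfmj, if_neg h2, mul_zero]
      · rw [hfpj, if_neg h1, zero_mul]
    simp [this]
  -- norms via coefficients
  have hupnorm : ‖up‖^2 = ∑' j, fp j * fp j := by
    rw [← real_inner_self_eq_norm_sq, inner_lp_eq_tsum X bB, hrup]
  have humnorm : ‖um‖^2 = ∑' j, fm j * fm j := by
    rw [← real_inner_self_eq_norm_sq, inner_lp_eq_tsum X bB, hrum]
  -- spectral identities
  have hTup : ⟪T up, up⟫ = ∑' j, (lam j)⁻¹ * (fp j * fp j) := by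
    rw [spectral_inner bB T hTsym lam hTeig up, hrup]
  have hTum : ⟪T um, um⟫ = ∑' j, (lam j)⁻¹ * (fm j * fm j) := by
    rw [spectral_inner bB T hTsym lam hTeig um, hrum]
  have hsum_fp : Summable (fun j => fp j * fp j) := summable_mul_self fp
  have hsum_fm : Summable (fun j => fm j * fm j) := summable_mul_self fm
  have hsum_lfp : Summable (fun j => (lam j)⁻¹ * (fp j * fp j)) := by
    refine Summable.of_nonneg_of_le (fun j => ?_) (fun j => ?_) (hsum_fp.mul_left (lam 0)⁻¹)
    · exact mul_nonneg (inv_nonneg.mpr (hpos j).le) (mul_self_nonneg _)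
    · have h1 : (lam j)⁻¹ ≤ (lam 0)⁻¹ :=
        inv_anti₀ (hpos 0) (hmono (Nat.zero_le j))
      exact mul_le_mul_of_nonneg_right h1 (mul_self_nonneg _)
  have hsum_lfm : Summable (fun j => (lam j)⁻¹ * (fm j * fm j)) := by
    refine Summable.of_nonneg_of_le (fun j => ?_) (fun j => ?_) (hsum_fm.mul_left (lam 0)⁻¹)
    · exact mul_nonneg (inv_nonneg.mpr (hpos j).le) (mul_self_nonneg _)
    · have h1 : (lam j)⁻¹ ≤ (lam 0)⁻¹ :=
        inv_anti₀ (hpos 0) (hmono (Nat.zero_le j))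
      exact mul_le_mul_of_nonneg_right h1 (mul_self_nonneg _)
  have hIple : ⟪T up, up⟫ ≤ (lam k0)⁻¹ * ‖up‖^2 := by
    rw [hTup, hupnorm, ← tsum_mul_left]
    refine Summable.tsum_le_tsum (fun j => ?_) hsum_lfp (hsum_fp.mul_left _)
    by_cases h1 : b < lam j
    · exact mul_le_mul_of_nonneg_right (inv_anti₀ hlampos (hk0le j h1))
        (mul_self_nonneg _)
    · rw [hfpj, if_neg h1]
      simp
  -- projections are in W
  have hupW : up ∈ Vᗮ := by
    rw [hV]
    apply mem_orthogonal_span'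
    rintro u ⟨j, hj, rfl⟩
    rw [← hbB, ← bB.repr_apply_apply, hrup, hfpj, if_neg (not_lt.mpr hj.2)]
  have humW : um ∈ Vᗮ := by
    rw [hV]
    apply mem_orthogonal_span'
    rintro u ⟨j, hj, rfl⟩
    rw [← hbB, ← bB.repr_apply_apply, hrum, hfmj, if_neg (not_lt.mpr hj.1)]
  set q := up - um with hqdef
  have hqW : q ∈ W := hW ▸ Submodule.sub_mem _ hupW humW
  have hq_inner : ⟪h, q⟫ = ‖up‖^2 - ‖um‖^2 := by
    have e1 : ⟪h, q⟫ = ⟪up, up⟫ - ⟪up, um⟫ + (⟪um, up⟫ - ⟪um, um⟫) := by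
      rw [hhd, hqdef, inner_add_left, inner_sub_right, inner_sub_right]
    have e2 : ⟪um, up⟫ = 0 := by rw [real_inner_comm]; exact hpm0
    rw [e1, hpm0, e2, real_inner_self_eq_norm_sq, real_inner_self_eq_norm_sq]
    ring
  have hhnorm : ‖h‖^2 = ‖up‖^2 + ‖um‖^2 := by
    rw [hhd, norm_add_sq_real, hpm0]
    ring
  have hqnorm : ‖q‖ = ‖h‖ := by
    have h1 : ‖q‖^2 = ‖up‖^2 + ‖um‖^2 := by
      rw [hqdef, norm_sub_sq_real, hpm0]
      ring
    have h2 : ‖q‖^2 = ‖h‖^2 := by rw [h1, hhnorm]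
    nlinarith [norm_nonneg q, norm_nonneg h]
  -- L² identifications
  set gp := ι up with hgpdef
  set gm := ι um with hgmdef
  have hgp2 : ∫ x, gp x * gp x ∂μ = ⟪T up, up⟫ := by
    rw [hT, L2.inner_def]
    simp [RCLike.inner_apply, pow_two]
    rfl
  have hgm2 : ∫ x, gm x * gm x ∂μ = ⟪T um, um⟫ := by
    rw [hT, L2.inner_def]
    simp [RCLike.inner_apply, pow_two]
    rfl
  -- a.e. facts
  have hΩae : ∀ᵐ x ∂μ, x ∈ Ω := by
    rw [hμ]; exact ae_restrict_mem hΩo.measurableSet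
  have hmF_ae : (mF : EuclideanSpace ℝ (Fin n) → ℝ) =ᵐ[μ]
      fun x => f' x (ι (w+v) x) * (ι h) x := hm.coeFn_toLp
  have hiq_eq : ι q = gp - gm := by rw [hqdef, map_sub]
  have hih_eq : ι h = gp + gm := by rw [hhd, map_add]
  have hiq_ae : (ι q : EuclideanSpace ℝ (Fin n) → ℝ) =ᵐ[μ] fun x => gp x - gm x := by
    rw [hiq_eq]; exact Lp.coeFn_sub gp gm
  have hih_ae : (ι h : EuclideanSpace ℝ (Fin n) → ℝ) =ᵐ[μ] fun x => gp x + gm x := by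
    rw [hih_eq]; exact Lp.coeFn_add gp gm
  -- integrability
  have hInt1 : Integrable (fun x => mF x * (ι q) x) μ := by
    simpa [RCLike.inner_apply, mul_comm] using L2.integrable_inner (𝕜 := ℝ) mF (ι q)
  have hIgp : Integrable (fun x => gp x * gp x) μ := by
    simpa [RCLike.inner_apply, pow_two] using L2.integrable_inner (𝕜 := ℝ) gp gp
  have hIgm : Integrable (fun x => gm x * gm x) μ := by
    simpa [RCLike.inner_apply, pow_two] using L2.integrable_inner (𝕜 := ℝ) gm gm
  -- pointwise bound and integral inequality
  have hint : ∫ x, mF x * (ι q) x ∂μ ≤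
      max b 0 * (∫ x, gp x * gp x ∂μ) - a * (∫ x, gm x * gm x ∂μ) := by
    have hIrhs : Integrable (fun x => max b 0 * (gp x * gp x) - a * (gm x * gm x)) μ :=
      (hIgp.const_mul _).sub (hIgm.const_mul _)
    have hptwise : (fun x => mF x * (ι q) x) ≤ᵐ[μ]
        fun x => max b 0 * (gp x * gp x) - a * (gm x * gm x) := by
      filter_upwards [hΩae, hmF_ae, hiq_ae, hih_ae] with x hx h1 h2 h3
      rw [h1, h3, h2]
      have hm' := hrange x hx (ι (w+v) x)
      obtain ⟨hma, hmb⟩ := hm'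
      have hb' : f' x (ι (w+v) x) ≤ max b 0 := le_trans hmb (le_max_left _ _)
      nlinarith [mul_self_nonneg (gp x), mul_self_nonneg (gm x),
        mul_le_mul_of_nonneg_right hb' (mul_self_nonneg (gp x)),
        mul_le_mul_of_nonneg_right hma (mul_self_nonneg (gm x))]
    calc ∫ x, mF x * (ι q) x ∂μ
        ≤ ∫ x, (max b 0 * (gp x * gp x) - a * (gm x * gm x)) ∂μ :=
          integral_mono_ae hInt1 hIrhs hptwise
      _ = max b 0 * (∫ x, gp x * gp x ∂μ) - a * (∫ x, gm x * gm x ∂μ) := by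
          rw [integral_sub (hIgp.const_mul _) (hIgm.const_mul _),
            integral_const_mul, integral_const_mul]
  -- the S term
  have hSterm : ⟪S mF, q⟫ = ∫ x, mF x * (ι q) x ∂μ := by
    rw [hS, L2.inner_def]
    simp [RCLike.inner_apply]
    congr 1; funext x; exact mul_comm _ _
  -- lower bound for a * Im - ‖um‖²
  have hmterm : δm * ‖um‖^2 ≤ a * (∫ x, gm x * gm x ∂μ) - ‖um‖^2 := by
    rw [hgm2]
    by_cases h0 : N = 0
    · have hum0 : um = 0 := by
        rw [humdef]
        have : fm = 0 := by
          ext j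
          rw [hfmj]
          have : ¬ lam j < a := by
            intro hc
            exact absurd (hltN j hc) (by omega)
          rw [if_neg this]
          rfl
        rw [this, map_zero]
      rw [hum0]
      simp
    · have haN : 0 < a := lt_trans (hpos 0) (hNlt 0 (Nat.pos_of_ne_zero h0))
      have hlamN : 0 < lam (N-1) := hpos _
      have hImge : (lam (N-1))⁻¹ * ‖um‖^2 ≤ ⟪T um, um⟫ := by
        rw [hTum, humnorm, ← tsum_mul_left]
        refine Summable.tsum_le_tsum (fun j => ?_) (hsum_fm.mul_left _) hsum_lfm
        by_cases h1 : lam j < a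
        · have hj : j ≤ N - 1 := by
            have := hltN j h1
            omega
          have : lam j ≤ lam (N-1) := hmono hj
          exact mul_le_mul_of_nonneg_right (inv_anti₀ (hpos j) this)
            (mul_self_nonneg _)
        · rw [hfmj, if_neg h1]
          simp
      have h1 : a * ((lam (N-1))⁻¹ * ‖um‖^2) ≤ a * ⟪T um, um⟫ :=
        mul_le_mul_of_nonneg_left hImge haN.le
      have hδmval : δm = a / lam (N-1) - 1 := by rw [hδmdef, if_neg h0]
      have h3 : (a / lam (N-1) - 1) * ‖um‖^2 = a * ((lam (N-1))⁻¹ * ‖um‖^2) - ‖um‖^2 := by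
        rw [div_eq_mul_inv]; ring
      rw [hδmval, h3]
      linarith [h1]
  -- lower bound for ‖up‖² - max b 0 * Ip
  have hpterm : δp * ‖up‖^2 ≤ ‖up‖^2 - max b 0 * (∫ x, gp x * gp x ∂μ) := by
    rw [hgp2]
    have h1 : max b 0 * ⟪T up, up⟫ ≤ max b 0 * ((lam k0)⁻¹ * ‖up‖^2) :=
      mul_le_mul_of_nonneg_left hIple (le_max_right _ _)
    have h2 : max b 0 * ((lam k0)⁻¹ * ‖up‖^2) = (max b 0 / lam k0) * ‖up‖^2 := by
      rw [div_eq_mul_inv]; ring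
    have h3 : (1 - max b 0 / lam k0) * ‖up‖^2 = ‖up‖^2 - max b 0 / lam k0 * ‖up‖^2 := by
      ring
    rw [hδpdef, h3]
    linarith [h1, h2]
  -- combine
  have hkey : C * ‖h‖^2 ≤ ⟪h - S mF, q⟫ := by
    rw [inner_sub_left, hq_inner, hSterm]
    have hup2 : δp * ‖up‖^2 + δm * ‖um‖^2 ≤
        ‖up‖^2 - ‖um‖^2 - ∫ x, mF x * (ι q) x ∂μ := by
      linarith [hint, hpterm, hmterm]
    have hC2 : C * ‖h‖^2 ≤ δp * ‖up‖^2 + δm * ‖um‖^2 := by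
      rw [hhnorm]
      have e : C * (‖up‖^2 + ‖um‖^2) = C * ‖up‖^2 + C * ‖um‖^2 := by ring
      linarith [mul_le_mul_of_nonneg_right hCδp (sq_nonneg ‖up‖),
        mul_le_mul_of_nonneg_right hCδm (sq_nonneg ‖um‖), e]
    linarith
  -- projection
  set P : X := (W.orthogonalProjectionOnto (h - S mF) : X) with hPdef
  have hproj : ⟪P, q⟫ = ⟪h - S mF, q⟫ := by
    have h0 : ⟪h - S mF - P, q⟫ = 0 := W.starProjection_inner_eq_zero (h - S mF) q hqW
    rw [inner_sub_left] at h0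
    linarith
  have hcs : ⟪P, q⟫ ≤ ‖P‖ * ‖q‖ := real_inner_le_norm P q
  by_cases hh0 : h = 0
  · rw [hh0]
    simp [norm_nonneg]
  · have hhpos : 0 < ‖h‖ := norm_pos_iff.mpr hh0
    have hchain : C * ‖h‖ * ‖h‖ ≤ ‖P‖ * ‖h‖ := by
      have : C * ‖h‖^2 ≤ ‖P‖ * ‖h‖ := by
        have h4 : C * ‖h‖^2 ≤ ‖P‖ * ‖q‖ := by
          calc C * ‖h‖^2 ≤ ⟪h - S mF, q⟫ := hkey
            _ = ⟪P, q⟫ := hproj.symm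
            _ ≤ ‖P‖ * ‖q‖ := hcs
        rwa [hqnorm] at h4
      have e2 : ‖h‖^2 = ‖h‖ * ‖h‖ := pow_two ‖h‖
      calc C * ‖h‖ * ‖h‖ = C * ‖h‖^2 := by rw [e2]; ring
        _ ≤ ‖P‖ * ‖h‖ := this
    exact le_of_mul_le_mul_right hchain hhpos
end

section
/- Let H be a Hilbert space, (φ_k)_{k≥1} an orthogonal basis of eigenvectors of a positive self-adjoint operator A with eigenvalues 0 < λ₁ ≤ λ₂ ≤ …, let [a,b] be an interval, γ = (a+b)/2, c < min over k with λ_k ∉ [a,b] of |λ_k − γ|, and let W be the closed span of {φ_k : λ_k ∉ [a,b]}. Then for every bounded self-adjoint operator B with ‖B − γI‖ ≤ c, the operator P_W(A − B) restricted to W is bounded below: ‖P_W(A−B)h‖ ≥ (min_{λ_k∉[a,b]} |λ_k−γ| − c)·c'·‖h‖ for all h ∈ W (for an appropriate constant c' > 0 depending only on the spectrum). -/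
set_option synthInstance.maxHeartbeats 400000

section Aux

variable {H : Type*} [NormedAddCommGroup H] [InnerProductSpace ℝ H]

/-- Parseval: `‖x‖ ^ 2 = ∑' k, ⟪b k, x⟫ ^ 2` for a real Hilbert basis. -/
theorem aux_parseval (b : HilbertBasis ℕ ℝ H) (x : H) :
    HasSum (fun k => (inner ℝ (b k) x : ℝ) ^ 2) (‖x‖ ^ 2) := by
  have h := b.hasSum_inner_mul_inner x x
  have : (inner ℝ x x : ℝ) = ‖x‖ ^ 2 := real_inner_self_eq_norm_sq x
  rw [this] at h
  have e : (fun k => (inner ℝ (b k) x : ℝ) ^ 2) = fun i => inner ℝ x (b i) * inner ℝ (b i) x := by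
    funext k
    rw [sq, real_inner_comm x (b k)]
  rw [e]
  exact h

end Aux

/-- abstract spectral-gap coercivity: let `H` be a Hilbert
space, `(φ_k)` an orthonormal basis of eigenvectors of a positive self-adjoint
operator `A` with eigenvalues `0 < λ₁ ≤ λ₂ ≤ …`, `[a,b]` an interval,
`γ = (a+b)/2`, and `c < m ≤ min {|λ_k − γ| : λ_k ∉ [a,b]}`. Let `W` be the
closed span of `{φ_k : λ_k ∉ [a,b]}` (equivalently, `span{φ_k : λ_k ∈ [a,b]}ᗮ`)
and `P_W` the orthogonal projection onto `W`. Then there is `c' > 0`,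
depending only on the spectrum, such that for every bounded self-adjoint `B`
with `‖B − γI‖ ≤ c` and every `h ∈ W`,
`‖P_W (A − B) h‖ ≥ (m − c) · c' · ‖h‖`. -/
theorem abstract_spectral_gap_coercivity {H : Type*}
    [NormedAddCommGroup H] [InnerProductSpace ℝ H] [CompleteSpace H]
    (φ : ℕ → H) (hortho : Orthonormal ℝ φ)
    (hcomplete : (Submodule.span ℝ (Set.range φ)).topologicalClosure = ⊤)
    (lam : ℕ → ℝ) (hpos : ∀ k, 0 < lam k) (hmono : Monotone lam)
    (A : H →L[ℝ] H) (hAsa : IsSelfAdjoint A)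
    (hA : ∀ k, A (φ k) = lam k • φ k)
    (a b c m : ℝ) (hab : a ≤ b) (hc0 : 0 ≤ c)
    (hm : ∀ k, lam k ∉ Set.Icc a b → m ≤ |lam k - (a + b) / 2|)
    (hcm : c < m) :
    ∃ c' : ℝ, 0 < c' ∧
      ∀ B : H →L[ℝ] H, IsSelfAdjoint B →
        ‖B - ((a + b) / 2) • ContinuousLinearMap.id ℝ H‖ ≤ c →
        ∀ h ∈ (Submodule.span ℝ (φ '' {k | lam k ∈ Set.Icc a b}))ᗮ,
          (m - c) * c' * ‖h‖ ≤
            ‖(Submodule.orthogonalProjectionOnto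
                (Submodule.span ℝ (φ '' {k | lam k ∈ Set.Icc a b}))ᗮ
                ((A - B) h) : H)‖ := by
  classical
  set γ : ℝ := (a + b) / 2 with hγ
  set S : Submodule ℝ H := Submodule.span ℝ (φ '' {k | lam k ∈ Set.Icc a b}) with hS
  set W : Submodule ℝ H := Sᗮ with hW
  set T : H →L[ℝ] H := A - γ • ContinuousLinearMap.id ℝ H with hT
  have hm0 : 0 ≤ m := le_trans hc0 hcm.le
  -- Hilbert basis
  let bH : HilbertBasis ℕ ℝ H := HilbertBasis.mk hortho (by rw [hcomplete])
  have hbH : ∀ k, bH k = φ k := by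
    intro k
    have := HilbertBasis.coe_mk hortho (show ⊤ ≤ (Submodule.span ℝ (Set.range φ)).topologicalClosure by rw [hcomplete])
    exact congrFun this k
  -- T is self-adjoint
  have hTsa : IsSelfAdjoint T := by
    apply hAsa.sub
    rw [ContinuousLinearMap.isSelfAdjoint_iff_isSymmetric]
    intro x y
    simp [real_inner_smul_left, real_inner_smul_right, real_inner_comm]
  have hTsym := (ContinuousLinearMap.isSelfAdjoint_iff_isSymmetric.mp hTsa)
  -- action of T on the basis
  have hTφ : ∀ k, T (φ k) = (lam k - γ) • φ k := by
    intro k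
    simp only [hT, ContinuousLinearMap.sub_apply, ContinuousLinearMap.smul_apply,
      ContinuousLinearMap.id_apply, hA k, sub_smul]
  -- coefficients vanish in the box
  have hcoef0 : ∀ h ∈ W, ∀ k, lam k ∈ Set.Icc a b → (inner ℝ (φ k) h : ℝ) = 0 := by
    intro h hh k hk
    exact (Submodule.mem_orthogonal S h).mp hh (φ k) (Submodule.subset_span ⟨k, hk, rfl⟩)
  -- T h stays in W for h ∈ W
  have hTW : ∀ h ∈ W, T h ∈ W := by
    intro h hh
    rw [hW, Submodule.mem_orthogonal]
    intro u hu
    induction hu using Submodule.span_induction with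
    | mem x hx =>
      obtain ⟨k, hk, rfl⟩ := hx
      have : (inner ℝ (φ k) (T h) : ℝ) = inner ℝ (T (φ k)) h := (hTsym (φ k) h).symm
      rw [this, hTφ k, real_inner_smul_left, hcoef0 h hh k hk, mul_zero]
    | zero => simp
    | add x y _ _ hx hy => rw [inner_add_left, hx, hy, add_zero]
    | smul r x _ hx => rw [real_inner_smul_left, hx, mul_zero]
  -- coercivity of T on W
  have hTcoer : ∀ h ∈ W, m * ‖h‖ ≤ ‖T h‖ := by
    intro h hh
    have hsq : (m * ‖h‖) ^ 2 ≤ ‖T h‖ ^ 2 := by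
      have h1 := aux_parseval bH h
      have h2 := aux_parseval bH (T h)
      have hpt : ∀ k, m ^ 2 * (inner ℝ (φ k) h : ℝ) ^ 2 ≤ (inner ℝ (φ k) (T h) : ℝ) ^ 2 := by
        intro k
        have hTk : (inner ℝ (φ k) (T h) : ℝ) = (lam k - γ) * inner ℝ (φ k) h := by
          have h' : (inner ℝ (φ k) (T h) : ℝ) = inner ℝ (T (φ k)) h := (hTsym (φ k) h).symm
          rw [h', hTφ k, real_inner_smul_left]
        by_cases hk : lam k ∈ Set.Icc a b
        · rw [hcoef0 h hh k hk] at hTk ⊢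
          simp [hTk]
        · rw [hTk, mul_pow]
          have := hm k hk
          have habs : m ^ 2 ≤ (lam k - γ) ^ 2 := by
            rw [← sq_abs (lam k - γ)]
            exact pow_le_pow_left₀ hm0 this 2
          exact mul_le_mul_of_nonneg_right habs (sq_nonneg _)
      have h1' : HasSum (fun k => m ^ 2 * (inner ℝ (φ k) h : ℝ) ^ 2) (m ^ 2 * ‖h‖ ^ 2) := by
        have := h1.mul_left (m ^ 2)
        simpa [hbH] using this
      have h2' : HasSum (fun k => (inner ℝ (φ k) (T h) : ℝ) ^ 2) (‖T h‖ ^ 2) := by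
        simpa [hbH] using h2
      calc (m * ‖h‖) ^ 2 = m ^ 2 * ‖h‖ ^ 2 := by ring
        _ ≤ ‖T h‖ ^ 2 := hasSum_le hpt h1' h2'
    have hmn : 0 ≤ m * ‖h‖ := mul_nonneg hm0 (norm_nonneg _)
    nlinarith [norm_nonneg (T h)]
  refine ⟨1, one_pos, ?_⟩
  intro B hBsa hBnorm h hh
  set Bt : H →L[ℝ] H := B - γ • ContinuousLinearMap.id ℝ H with hBt
  have hdecomp : (A - B) h = T h - Bt h := by
    simp only [hT, hBt, ContinuousLinearMap.sub_apply, ContinuousLinearMap.smul_apply,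
      ContinuousLinearMap.id_apply]
    abel
  have hPT : (Submodule.orthogonalProjectionOnto W (T h) : H) = T h := by
    exact Submodule.starProjection_eq_self_iff.mpr (hTW h hh)
  have hPB : ‖(Submodule.orthogonalProjectionOnto W (Bt h) : H)‖ ≤ c * ‖h‖ := by
    have hP1 : ‖(Submodule.orthogonalProjectionOnto W (Bt h) : H)‖ ≤ ‖Bt h‖ := by
      calc ‖(Submodule.orthogonalProjectionOnto W (Bt h) : H)‖
          = ‖Submodule.orthogonalProjectionOnto W (Bt h)‖ := rfl
        _ ≤ ‖Submodule.orthogonalProjectionOnto W‖ * ‖Bt h‖ := (Submodule.orthogonalProjectionOnto W).le_opNorm (Bt h)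
        _ ≤ 1 * ‖Bt h‖ :=
            mul_le_mul_of_nonneg_right (Submodule.orthogonalProjectionOnto_norm_le W) (norm_nonneg _)
        _ = ‖Bt h‖ := one_mul _
    calc ‖(Submodule.orthogonalProjectionOnto W (Bt h) : H)‖ ≤ ‖Bt h‖ := hP1
        _ ≤ ‖Bt‖ * ‖h‖ := Bt.le_opNorm h
        _ ≤ c * ‖h‖ := mul_le_mul_of_nonneg_right hBnorm (norm_nonneg h)
  have hsplit : (Submodule.orthogonalProjectionOnto W ((A - B) h) : H)
      = T h - (Submodule.orthogonalProjectionOnto W (Bt h) : H) := by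
    rw [hdecomp, map_sub]
    push_cast
    rw [hPT]
  calc (m - c) * 1 * ‖h‖ = m * ‖h‖ - c * ‖h‖ := by ring
    _ ≤ ‖T h‖ - ‖(Submodule.orthogonalProjectionOnto W (Bt h) : H)‖ :=
        sub_le_sub (hTcoer h hh) hPB
    _ ≤ ‖T h - (Submodule.orthogonalProjectionOnto W (Bt h) : H)‖ := norm_sub_norm_le _ _
    _ = _ := by rw [hsplit]
end

section
/- Let F : X → Y be flat and suppose dim V_X = dim V_Y = d < ∞. Then solving F(x) = g for given g ∈ Y is equivalent to solving the d-dimensional equation 𝓕_g(v) = Q_Y g, where 𝓕_g : V_X → V_Y is 𝓕_g = Q_Y ∘ F ∘ H_g and H_g(v) = v + (F_v)⁻¹(P_Y g). Precisely: x solves F(x) = g if and only if x = H_g(v) for some v ∈ V_X with 𝓕_g(v) = Q_Y g. -/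
/- Product model of the Banach space decompositions `X = W_X ⊕ V_X` and
`Y = W_Y ⊕ V_Y`: `X = W × V`, `Y = W' × V'`, with `P_X = Prod.fst`,
`Q_X = Prod.snd`, `P_Y = Prod.fst`, `Q_Y = Prod.snd`. -/
variable {W V W' V' : Type*}
  [NormedAddCommGroup W] [NormedSpace ℝ W] [CompleteSpace W]
  [NormedAddCommGroup V] [NormedSpace ℝ V] [CompleteSpace V]
  [NormedAddCommGroup W'] [NormedSpace ℝ W'] [CompleteSpace W']
  [NormedAddCommGroup V'] [NormedSpace ℝ V'] [CompleteSpace V']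

/-- for a flat map `F` with `dim V_X = dim V_Y = d < ∞`, solving
`F(x) = g` is equivalent to the `d`-dimensional equation `𝓕_g(v) = Q_Y g`,
where `𝓕_g = Q_Y ∘ F ∘ H_g` and `H_g(v) = v + F_v⁻¹(P_Y g)`: `x` solves
`F(x) = g` iff `x = H_g(v)` for some `v ∈ V_X` with `𝓕_g(v) = Q_Y g`. -/
theorem finiteDimensional_reduction (F : W × V → W' × V') (G : V → W' → W)
    (hF : IsFlat F G)
    [FiniteDimensional ℝ V] [FiniteDimensional ℝ V']
    (hd : Module.finrank ℝ V = Module.finrank ℝ V')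
    (g : W' × V') :
    ∀ x : W × V, F x = g ↔
      ∃ v : V, x = (G v g.1, v) ∧ (F (G v g.1, v)).2 = g.2 := by
  intro x
  obtain ⟨_, hG⟩ := hF
  obtain ⟨_, _, hL, hR⟩ := hG x.2
  constructor
  · intro h
    refine ⟨x.2, ?_, ?_⟩
    · have h1 : projRestr F x.2 x.1 = g.1 := by simp [projRestr, h]
      have := hL x.1
      rw [h1] at this
      exact Prod.ext this.symm rfl
    · have h1 : projRestr F x.2 x.1 = g.1 := by simp [projRestr, h]
      have := hL x.1
      rw [h1] at this
      rw [show (G x.2 g.1, x.2) = x from Prod.ext this rfl, h]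
  · rintro ⟨v, hx, h2⟩
    obtain ⟨_, _, hL', hR'⟩ := hG v
    have h1 : (F (G v g.1, v)).1 = g.1 := hR' g.1
    rw [hx]
    exact Prod.ext h1 h2
end
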